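/- arXiv:2501.11766 — 7 statements merged into one kernel-verified Lean document; each statement's English description precedes it below -/
import Mathlib

section
/- Let k ≥ 1 be an integer and N ≥ 1 a real number. Then for all real numbers s, t ≥ exp^{(k)}(2N) and every integer j with 1 ≤ j ≤ k, one has ln^{(j)}(s·t) ≤ (ln^{(j)} s)·(ln^{(j)} t). -/
lemma le_iterate_exp_aux (m : ℕ) (x : ℝ) : x ≤ Real.exp^[m] x := by
  induction m with
  | zero => simp
  | succ n ih =>
    rw [Function.iterate_succ_apply']
    have := Real.add_one_le_exp (Real.exp^[n] x)
    linarith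

lemma log_iterate_ge_aux (c : ℝ) :
    ∀ j k : ℕ, j ≤ k → ∀ x : ℝ, Real.exp^[k] c ≤ x →
      Real.exp^[k - j] c ≤ Real.log^[j] x := by
  intro j
  induction j with
  | zero => intro k _ x hx; simpa using hx
  | succ n ih =>
    intro k hk x hx
    obtain ⟨k', rfl⟩ : ∃ k', k = k' + 1 := ⟨k - 1, by omega⟩
    rw [Function.iterate_succ_apply]
    have hx' : Real.exp^[k'] c ≤ Real.log x := by
      rw [Function.iterate_succ_apply'] at hx
      have := Real.log_le_log (Real.exp_pos _) hx
      rwa [Real.log_exp] at this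
    have hkk : k' + 1 - (n + 1) = k' - n := by omega
    rw [hkk]
    exact ih k' (by omega) _ hx'

/-- For an integer `k ≥ 1` and a real `N ≥ 1`, for all reals
`s, t ≥ exp^[k] (2N)` and every integer `j` with `1 ≤ j ≤ k`,
`ln^[j] (s·t) ≤ (ln^[j] s) · (ln^[j] t)`. -/
theorem iterated_log_submultiplicative
    (k : ℕ) (hk : 1 ≤ k) (N : ℝ) (hN : 1 ≤ N)
    (s t : ℝ) (hs : Real.exp^[k] (2 * N) ≤ s) (ht : Real.exp^[k] (2 * N) ≤ t)
    (j : ℕ) (hj1 : 1 ≤ j) (hjk : j ≤ k) :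
    Real.log^[j] (s * t) ≤ Real.log^[j] s * Real.log^[j] t := by
  -- basic bounds
  have hN2 : (2 : ℝ) ≤ 2 * N := by linarith
  have hlow : ∀ m : ℕ, (2 : ℝ) ≤ Real.exp^[m] (2 * N) :=
    fun m => le_trans hN2 (le_iterate_exp_aux m _)
  have hs1 : (1 : ℝ) ≤ s := le_trans (by linarith [hlow k]) hs
  have ht1 : (1 : ℝ) ≤ t := le_trans (by linarith [hlow k]) ht
  have hst : Real.exp^[k] (2 * N) ≤ s * t :=
    le_trans hs (le_mul_of_one_le_right (by linarith [hs1]) ht1)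
  -- key lower bounds on iterated logs
  have Hs : ∀ m, m ≤ k → (2 : ℝ) ≤ Real.log^[m] s :=
    fun m hm => le_trans (hlow (k - m)) (log_iterate_ge_aux _ m k hm s hs)
  have Ht : ∀ m, m ≤ k → (2 : ℝ) ≤ Real.log^[m] t :=
    fun m hm => le_trans (hlow (k - m)) (log_iterate_ge_aux _ m k hm t ht)
  have Hst : ∀ m, m ≤ k → (2 : ℝ) ≤ Real.log^[m] (s * t) :=
    fun m hm => le_trans (hlow (k - m)) (log_iterate_ge_aux _ m k hm _ hst)
  clear hs ht hst
  induction j with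
  | zero => omega
  | succ n ih =>
    rcases Nat.eq_zero_or_pos n with rfl | hn
    · -- base case j = 1
      show Real.log (s * t) ≤ Real.log s * Real.log t
      rw [Real.log_mul (by positivity) (by positivity)]
      have h1 : (2:ℝ) ≤ Real.log s := Hs 1 hjk
      have h2 : (2:ℝ) ≤ Real.log t := Ht 1 hjk
      nlinarith
    · -- inductive step
      have hnk : n ≤ k := by omega
      have ihn := ih hn hnk
      rw [Function.iterate_succ_apply', Function.iterate_succ_apply',
        Function.iterate_succ_apply']
      have h1 := Hs n hnk
      have h2 := Ht n hnk
      have h3 := Hst n hnk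
      calc Real.log (Real.log^[n] (s * t))
          ≤ Real.log (Real.log^[n] s * Real.log^[n] t) :=
            Real.log_le_log (by linarith) ihn
        _ = Real.log (Real.log^[n] s) + Real.log (Real.log^[n] t) :=
            Real.log_mul (by linarith) (by linarith)
        _ ≤ Real.log (Real.log^[n] s) * Real.log (Real.log^[n] t) := by
            have hl1 : Real.log 2 ≤ Real.log (Real.log^[n] s) :=
              Real.log_le_log two_pos h1
            have hl2 : Real.log 2 ≤ Real.log (Real.log^[n] t) :=
              Real.log_le_log two_pos h2
            have hls := Hs (n + 1) hjk
            have hlt := Ht (n + 1) hjk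
            rw [Function.iterate_succ_apply'] at hls hlt
            nlinarith
end

section
/- Let k ≥ 1 be an integer and N ≥ 1 a real number, and set E = exp^{(k)}(2N). Define Φ⁰(t) = t·(ln t)²·(ln^{(2)} t)²⋯(ln^{(k−1)} t)²·(ln^{(k)} t)^{2N} for t ≥ E. Then Φ⁰ is submultiplicative on [E,∞): for all s, t ≥ E one has Φ⁰(s·t) ≤ Φ⁰(s)·Φ⁰(t). -/
private lemma exp_iter_ge (c : ℝ) : ∀ j, c ≤ Real.exp^[j] c := by
  intro j
  induction j with
  | zero => simp
  | succ n ih =>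
    rw [Function.iterate_succ_apply']
    exact ih.trans (by linarith [Real.add_one_le_exp (Real.exp^[n] c)])

private lemma log_iter_ge (k : ℕ) (c : ℝ) (t : ℝ) (ht : Real.exp^[k] c ≤ t) :
    ∀ i, i ≤ k → Real.exp^[k - i] c ≤ Real.log^[i] t := by
  intro i
  induction i with
  | zero => intro _; simpa using ht
  | succ n ih =>
    intro hn
    rw [Function.iterate_succ_apply']
    have h1 : Real.exp^[k - n] c ≤ Real.log^[n] t := ih (by omega)
    have hkn : k - n = (k - (n + 1)) + 1 := by omega
    rw [hkn, Function.iterate_succ_apply'] at h1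
    calc Real.exp^[k - (n + 1)] c
        = Real.log (Real.exp (Real.exp^[k - (n + 1)] c)) := (Real.log_exp _).symm
      _ ≤ Real.log (Real.log^[n] t) := Real.log_le_log (Real.exp_pos _) h1

private lemma log_iter_two_le (k : ℕ) (N : ℝ) (hN : 1 ≤ N) (t : ℝ)
    (ht : Real.exp^[k] (2 * N) ≤ t) {i : ℕ} (hi : i ≤ k) :
    2 ≤ Real.log^[i] t := by
  have h1 := log_iter_ge k (2 * N) t ht i hi
  have h2 := exp_iter_ge (2 * N) (k - i)
  linarith

private lemma log_iter_submul (k : ℕ) (N : ℝ) (hN : 1 ≤ N)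
    (s t : ℝ) (hs : Real.exp^[k] (2 * N) ≤ s) (ht : Real.exp^[k] (2 * N) ≤ t)
    (hst : Real.exp^[k] (2 * N) ≤ s * t) :
    ∀ i, 1 ≤ i → i ≤ k →
      Real.log^[i] (s * t) ≤ Real.log^[i] s * Real.log^[i] t := by
  intro i
  induction i with
  | zero => omega
  | succ n ih =>
    intro _ hnk
    rcases Nat.eq_zero_or_pos n with hn0 | hn1
    · subst hn0
      show Real.log (s * t) ≤ Real.log s * Real.log t
      have hs0 : (0:ℝ) < s := lt_of_lt_of_le (by linarith [exp_iter_ge (2*N) k]) hs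
      have ht0 : (0:ℝ) < t := lt_of_lt_of_le (by linarith [exp_iter_ge (2*N) k]) ht
      rw [Real.log_mul hs0.ne' ht0.ne']
      have h1 : 2 ≤ Real.log s := log_iter_two_le k N hN s hs (i := 1) hnk
      have h2 : 2 ≤ Real.log t := log_iter_two_le k N hN t ht (i := 1) hnk
      nlinarith
    · have hh := ih hn1 (by omega)
      rw [Function.iterate_succ_apply', Function.iterate_succ_apply',
        Function.iterate_succ_apply']
      have hpos : 2 ≤ Real.log^[n] (s * t) := log_iter_two_le k N hN _ hst (by omega)
      have h1 : 2 ≤ Real.log^[n + 1] s := log_iter_two_le k N hN s hs hnk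
      have h2 : 2 ≤ Real.log^[n + 1] t := log_iter_two_le k N hN t ht hnk
      rw [Function.iterate_succ_apply'] at h1 h2
      calc Real.log (Real.log^[n] (s * t))
          ≤ Real.log (Real.log^[n] s * Real.log^[n] t) :=
            Real.log_le_log (by linarith) hh
        _ = Real.log (Real.log^[n] s) + Real.log (Real.log^[n] t) := by
            have hs2 : 2 ≤ Real.log^[n] s := log_iter_two_le k N hN s hs (by omega)
            have ht2 : 2 ≤ Real.log^[n] t := log_iter_two_le k N hN t ht (by omega)
            exact Real.log_mul (by linarith) (by linarith)
        _ ≤ Real.log (Real.log^[n] s) * Real.log (Real.log^[n] t) := by nlinarith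

/-- For `k ≥ 1`, `N ≥ 1`, `E = exp^[k](2N)`, the function
`Φ⁰(t) = t·(ln t)²·(ln^[2] t)²⋯(ln^[k-1] t)²·(ln^[k] t)^(2N)` is submultiplicative
on `[E, ∞)`: for all `s, t ≥ E`, `Φ⁰(s·t) ≤ Φ⁰(s)·Φ⁰(t)`. -/
theorem Phi0_submultiplicative
    (k : ℕ) (hk : 1 ≤ k) (N : ℝ) (hN : 1 ≤ N)
    (Phi0 : ℝ → ℝ)
    (hPhi0 : ∀ t, Real.exp^[k] (2 * N) ≤ t →
      Phi0 t = t * (∏ i ∈ Finset.Ico 1 k, (Real.log^[i] t) ^ 2) *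
        (Real.log^[k] t) ^ (2 * N)) :
    ∀ s, Real.exp^[k] (2 * N) ≤ s → ∀ t, Real.exp^[k] (2 * N) ≤ t →
      Phi0 (s * t) ≤ Phi0 s * Phi0 t := by
  intro s hs t ht
  have hE2 : (2:ℝ) ≤ Real.exp^[k] (2 * N) := by linarith [exp_iter_ge (2 * N) k]
  have hs1 : (1:ℝ) ≤ s := by linarith
  have ht0 : (0:ℝ) ≤ t := by linarith
  have hst : Real.exp^[k] (2 * N) ≤ s * t := ht.trans (le_mul_of_one_le_left ht0 hs1)
  rw [hPhi0 s hs, hPhi0 t ht, hPhi0 _ hst]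
  have hsub := log_iter_submul k N hN s t hs ht hst
  -- product part
  have hprod : (∏ i ∈ Finset.Ico 1 k, (Real.log^[i] (s * t)) ^ 2) ≤
      (∏ i ∈ Finset.Ico 1 k, (Real.log^[i] s) ^ 2) *
      (∏ i ∈ Finset.Ico 1 k, (Real.log^[i] t) ^ 2) := by
    rw [← Finset.prod_mul_distrib]
    refine Finset.prod_le_prod (fun i _ => sq_nonneg _) (fun i hi => ?_)
    rw [Finset.mem_Ico] at hi
    have h0 : (0:ℝ) ≤ Real.log^[i] (s * t) := by
      linarith [log_iter_two_le k N hN _ hst (le_of_lt hi.2)]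
    calc (Real.log^[i] (s * t)) ^ 2
        ≤ (Real.log^[i] s * Real.log^[i] t) ^ 2 :=
          pow_le_pow_left₀ h0 (hsub i hi.1 (le_of_lt hi.2)) 2
      _ = (Real.log^[i] s) ^ 2 * (Real.log^[i] t) ^ 2 := mul_pow _ _ _
  have hrpow : (Real.log^[k] (s * t)) ^ (2 * N) ≤
      (Real.log^[k] s) ^ (2 * N) * (Real.log^[k] t) ^ (2 * N) := by
    have h0 : (0:ℝ) ≤ Real.log^[k] (s * t) := by
      linarith [log_iter_two_le k N hN _ hst (le_refl k)]
    have hks : (0:ℝ) ≤ Real.log^[k] s := by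
      linarith [log_iter_two_le k N hN s hs (le_refl k)]
    have hkt : (0:ℝ) ≤ Real.log^[k] t := by
      linarith [log_iter_two_le k N hN t ht (le_refl k)]
    rw [← Real.mul_rpow hks hkt]
    exact Real.rpow_le_rpow h0 (hsub k hk (le_refl k)) (by linarith)
  -- combine
  have hP0 : (0:ℝ) ≤ ∏ i ∈ Finset.Ico 1 k, (Real.log^[i] (s * t)) ^ 2 :=
    Finset.prod_nonneg fun i _ => sq_nonneg _
  have hQ0 : (0:ℝ) ≤ (Real.log^[k] (s * t)) ^ (2 * N) := by
    apply Real.rpow_nonneg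
    linarith [log_iter_two_le k N hN _ hst (le_refl k)]
  have hst0 : (0:ℝ) ≤ s * t := by nlinarith
  calc s * t * (∏ i ∈ Finset.Ico 1 k, (Real.log^[i] (s * t)) ^ 2) *
        (Real.log^[k] (s * t)) ^ (2 * N)
      ≤ s * t * ((∏ i ∈ Finset.Ico 1 k, (Real.log^[i] s) ^ 2) *
          (∏ i ∈ Finset.Ico 1 k, (Real.log^[i] t) ^ 2)) *
        ((Real.log^[k] s) ^ (2 * N) * (Real.log^[k] t) ^ (2 * N)) := by
        apply mul_le_mul
        · exact mul_le_mul_of_nonneg_left hprod hst0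
        · exact hrpow
        · exact hQ0
        · positivity
    _ = (s * (∏ i ∈ Finset.Ico 1 k, (Real.log^[i] s) ^ 2) *
          (Real.log^[k] s) ^ (2 * N)) *
        (t * (∏ i ∈ Finset.Ico 1 k, (Real.log^[i] t) ^ 2) *
          (Real.log^[k] t) ^ (2 * N)) := by ring
end

section
/- Let k ≥ 1 be an integer, N > 1 a real number, and let j be a real number with j ≥ exp^{(k)}(2N). Then (ln^{(k−1)}(j+1))^{−(N−1)/2} − (ln^{(k−1)}(j+2))^{−(N−1)/2} ≥ ((N−1)/2)·[(j+2)·ln(j+2)·(ln^{(2)}(j+2))⋯(ln^{(k−2)}(j+2))·(ln^{(k−1)}(j+2))^{(N+1)/2}]^{-1}. -/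
private lemma two_le_iter_exp (n : ℕ) : 2 ≤ Real.exp^[n] 2 := by
  induction n with
  | zero => simp
  | succ n ih =>
    rw [Function.iterate_succ_apply']
    calc (2:ℝ) ≤ Real.exp^[n] 2 + 1 := by linarith
    _ ≤ Real.exp (Real.exp^[n] 2) := Real.add_one_le_exp _

private lemma iter_exp_mono_n : Monotone (fun n => Real.exp^[n] 2) := by
  apply monotone_nat_of_le_succ
  intro n
  rw [Function.iterate_succ_apply']
  calc Real.exp^[n] 2 ≤ Real.exp^[n] 2 + 1 := by linarith
  _ ≤ Real.exp (Real.exp^[n] 2) := Real.add_one_le_exp _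

private lemma iter_log_lower : ∀ (m : ℕ) (x : ℝ), Real.exp^[m] 2 ≤ x →
    ∀ i ≤ m, Real.exp^[m - i] 2 ≤ Real.log^[i] x := by
  intro m
  induction m with
  | zero =>
    intro x hx i hi
    interval_cases i
    simpa using hx
  | succ m ih =>
    intro x hx i hi
    cases i with
    | zero => simpa using hx
    | succ i =>
      rw [Function.iterate_succ_apply]
      have h1 : Real.exp^[m] 2 ≤ Real.log x := by
        rw [Function.iterate_succ_apply'] at hx
        calc Real.exp^[m] 2 = Real.log (Real.exp (Real.exp^[m] 2)) := (Real.log_exp _).symm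
        _ ≤ Real.log x := Real.log_le_log (Real.exp_pos _) hx
      have := ih (Real.log x) h1 i (Nat.succ_le_succ_iff.mp hi)
      simpa [Nat.succ_sub_succ] using this

private lemma two_le_iter_log {m : ℕ} {x : ℝ} (hx : Real.exp^[m] 2 ≤ x) {i : ℕ} (hi : i ≤ m) :
    2 ≤ Real.log^[i] x :=
  le_trans (two_le_iter_exp _) (iter_log_lower m x hx i hi)

private lemma iter_log_mono : ∀ (m : ℕ) (x y : ℝ), Real.exp^[m] 2 ≤ x → x ≤ y →
    ∀ i ≤ m, Real.log^[i] x ≤ Real.log^[i] y := by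
  intro m
  induction m with
  | zero =>
    intro x y hx hxy i hi
    interval_cases i
    simpa using hxy
  | succ m ih =>
    intro x y hx hxy i hi
    cases i with
    | zero => simpa using hxy
    | succ i =>
      rw [Function.iterate_succ_apply, Function.iterate_succ_apply]
      have hx0 : 0 < x := lt_of_lt_of_le (by linarith [two_le_iter_exp (m+1)]) hx
      have h1 : Real.exp^[m] 2 ≤ Real.log x := by
        rw [Function.iterate_succ_apply'] at hx
        calc Real.exp^[m] 2 = Real.log (Real.exp (Real.exp^[m] 2)) := (Real.log_exp _).symm
        _ ≤ Real.log x := Real.log_le_log (Real.exp_pos _) hx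
      exact ih (Real.log x) (Real.log y) h1 (Real.log_le_log hx0 hxy) i
        (Nat.succ_le_succ_iff.mp hi)

private lemma iter_log_hasDeriv : ∀ (m : ℕ) (x : ℝ), Real.exp^[m] 2 ≤ x →
    HasDerivAt (fun y => Real.log^[m] y) (∏ i ∈ Finset.range m, Real.log^[i] x)⁻¹ x := by
  intro m
  induction m with
  | zero =>
    intro x _
    simp only [Function.iterate_zero, id_eq, Finset.range_zero, Finset.prod_empty, inv_one]
    exact hasDerivAt_id' x
  | succ m ih =>
    intro x hx
    have hx' : Real.exp^[m] 2 ≤ x := le_trans (iter_exp_mono_n (Nat.le_succ m)) hx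
    have hne : Real.log^[m] x ≠ 0 := by
      have := two_le_iter_log hx' (le_refl m)
      linarith
    have h := (Real.hasDerivAt_log hne).comp x (ih x hx')
    have heq : (fun y => Real.log^[m+1] y) = Real.log ∘ Real.log^[m] := by
      funext y; rw [Function.iterate_succ_apply']; rfl
    rw [heq]
    refine h.congr_deriv ?_
    rw [Finset.prod_range_succ, mul_inv, mul_comm]

/-- For an integer `k ≥ 1`, a real `N > 1` and a real `j ≥ exp^[k](2N)`:
`(ln^[k-1](j+1))^(−(N−1)/2) − (ln^[k-1](j+2))^(−(N−1)/2)
   ≥ ((N−1)/2)·[(j+2)·ln(j+2)⋯(ln^[k-2](j+2))·(ln^[k-1](j+2))^((N+1)/2)]⁻¹`. -/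
theorem iterated_log_difference_lower_bound
    (k : ℕ) (hk : 1 ≤ k) (N : ℝ) (hN : 1 < N)
    (j : ℝ) (hj : Real.exp^[k] (2 * N) ≤ j) :
    (Real.log^[k - 1] (j + 1)) ^ (-(N - 1) / 2) -
        (Real.log^[k - 1] (j + 2)) ^ (-(N - 1) / 2) ≥
      ((N - 1) / 2) *
        ((∏ i ∈ Finset.range (k - 1), Real.log^[i] (j + 2)) *
          (Real.log^[k - 1] (j + 2)) ^ ((N + 1) / 2))⁻¹ := by
  obtain ⟨m, rfl⟩ : ∃ m, k = m + 1 := ⟨k - 1, (Nat.succ_pred_eq_of_pos hk).symm⟩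
  simp only [Nat.add_sub_cancel]
  -- basic bounds
  have hjE : Real.exp^[m+1] 2 ≤ j := by
    refine le_trans ?_ hj
    exact (Real.exp_monotone.iterate (m+1)) (by linarith)
  have h2E : (2:ℝ) ≤ Real.exp^[m+1] 2 := two_le_iter_exp _
  set F : ℝ → ℝ := fun y => (Real.log^[m] y) ^ (-(N - 1) / 2) with hF
  set f' : ℝ → ℝ := fun y => (-(N - 1) / 2) * (Real.log^[m] y) ^ (-(N - 1) / 2 - 1) *
    (∏ i ∈ Finset.range m, Real.log^[i] y)⁻¹ with hf'
  have hderiv : ∀ x : ℝ, Real.exp^[m+1] 2 ≤ x → HasDerivAt F (f' x) x := by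
    intro x hx
    have hx' : Real.exp^[m] 2 ≤ x := le_trans (iter_exp_mono_n (Nat.le_succ m)) hx
    have hne : Real.log^[m] x ≠ 0 := by
      have := two_le_iter_log hx' (le_refl m); linarith
    have h := (iter_log_hasDeriv m x hx').rpow_const (p := -(N - 1) / 2) (Or.inl hne)
    convert h using 1
    show (-(N - 1) / 2) * (Real.log^[m] x) ^ (-(N - 1) / 2 - 1) *
      (∏ i ∈ Finset.range m, Real.log^[i] x)⁻¹ = _
    ring
  have hlt : j + 1 < j + 2 := by linarith
  obtain ⟨c, hc, hceq⟩ := exists_hasDerivAt_eq_slope F f' hlt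
    (fun x hx => (hderiv x (by have := hx.1; linarith)).continuousAt.continuousWithinAt)
    (fun x hx => hderiv x (by have := hx.1.le; linarith))
  rw [show j + 2 - (j + 1) = (1:ℝ) by ring, div_one] at hceq
  have hgoal : F (j+1) - F (j+2) = -(f' c) := by rw [hceq]; ring
  rw [ge_iff_le, show (Real.log^[m] (j + 1)) ^ (-(N - 1) / 2) -
      (Real.log^[m] (j + 2)) ^ (-(N - 1) / 2) = F (j+1) - F (j+2) from rfl, hgoal]
  -- positivity facts at c and j+2
  have hcE : Real.exp^[m+1] 2 ≤ c := by have := hc.1.le; linarith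
  have hc2 : c ≤ j + 2 := hc.2.le
  have hjE2 : Real.exp^[m+1] 2 ≤ j + 2 := by linarith
  have hlc : 2 ≤ Real.log^[m] c := two_le_iter_log hcE (Nat.le_succ m)
  have hlj : 2 ≤ Real.log^[m] (j+2) := two_le_iter_log hjE2 (Nat.le_succ m)
  have hpc : ∀ i ∈ Finset.range m, (0:ℝ) < Real.log^[i] c := by
    intro i hi
    have := two_le_iter_log hcE (le_of_lt (Nat.lt_succ_of_lt (Finset.mem_range.mp hi)))
    linarith
  -- rewrite -(f' c)
  have hexp : -(N - 1) / 2 - 1 = -((N + 1) / 2) := by ring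
  have hrw : -(f' c) = ((N - 1) / 2) *
      ((∏ i ∈ Finset.range m, Real.log^[i] c) *
        (Real.log^[m] c) ^ ((N + 1) / 2))⁻¹ := by
    rw [show f' c = (-(N - 1) / 2) * (Real.log^[m] c) ^ (-(N - 1) / 2 - 1) *
      (∏ i ∈ Finset.range m, Real.log^[i] c)⁻¹ from rfl]
    rw [hexp, Real.rpow_neg (by linarith : (0:ℝ) ≤ Real.log^[m] c), mul_inv]
    ring
  rw [hrw]
  -- compare
  have hprod_le : (∏ i ∈ Finset.range m, Real.log^[i] c) ≤
      ∏ i ∈ Finset.range m, Real.log^[i] (j+2) := by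
    apply Finset.prod_le_prod
    · intro i hi; exact (hpc i hi).le
    · intro i hi
      exact iter_log_mono (m+1) c (j+2) hcE hc2 i
        (le_of_lt (Nat.lt_succ_of_lt (Finset.mem_range.mp hi)))
  have hrpow_le : (Real.log^[m] c) ^ ((N + 1) / 2) ≤
      (Real.log^[m] (j+2)) ^ ((N + 1) / 2) := by
    apply Real.rpow_le_rpow (by linarith)
    · exact iter_log_mono (m+1) c (j+2) hcE hc2 m (Nat.le_succ m)
    · linarith
  have hBpos : 0 < (∏ i ∈ Finset.range m, Real.log^[i] c) *
      (Real.log^[m] c) ^ ((N + 1) / 2) := by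
    apply mul_pos (Finset.prod_pos hpc)
    exact Real.rpow_pos_of_pos (by linarith) _
  have hAB : (∏ i ∈ Finset.range m, Real.log^[i] c) *
      (Real.log^[m] c) ^ ((N + 1) / 2) ≤
      (∏ i ∈ Finset.range m, Real.log^[i] (j+2)) *
        (Real.log^[m] (j+2)) ^ ((N + 1) / 2) := by
    apply mul_le_mul hprod_le hrpow_le (Real.rpow_pos_of_pos (by linarith) _).le
    exact Finset.prod_nonneg (fun i hi => (le_of_lt (lt_of_lt_of_le zero_lt_two
      (two_le_iter_log hjE2 (le_of_lt (Nat.lt_succ_of_lt (Finset.mem_range.mp hi)))))))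
  exact mul_le_mul_of_nonneg_left (inv_anti₀ hBpos hAB) (by linarith)
end

section
/- Let n ≥ 1, let w : ℝⁿ → [0,∞) be locally integrable with dμ = w dx, and let B̃ : ℝⁿ → (n×n real matrices) be Lipschitz; for Lipschitz v set ∇_A v(y) = B̃(y)·∇v(y) (defined a.e. by Rademacher's theorem). Fix x ∈ ℝⁿ, r > 0 and C_P > 0, and assume the proportional vanishing Poincaré inequality: for every Lipschitz function u on B(x, 3r/2) vanishing on a measurable subset E ⊆ B(x,r) with μ(E) ≥ μ(B(x,r))/2, one has ∫_{B(x,r)} u² dμ ≤ C_P·r²·∫_{B(x,3r/2)} |∇_A u|² dy. Let v be Lipschitz on B(x,2r), let v̄(y) = max{0, min{1, v(y)}}, and set 𝒜 = {y ∈ B(x,r) : v̄(y) = 0}, 𝒞 = {y ∈ B(x,r) : v̄(y) = 1}, 𝒟 = {y ∈ B(x,2r) : 0 < v̄(y) < 1}. If ∫_{B(x,3r/2)} |∇_A v̄(y)|² dy ≤ (C₀/r²)·μ(𝒟) for some C₀ > 0, and μ(𝒜) ≥ μ(B(x,r))/2, then C₀·μ(𝒟) ≥ C₁·μ(𝒞)²/μ(B(x,r)),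 where C₁ > 0 depends only on C_P. -/
open MeasureTheory Metric ENNReal

/-- The a.e.-defined gradient (via Rademacher, `fderiv` is the junk value `0` where `f` fails
to be differentiable) of `f : ℝⁿ → ℝ`, as a vector in `Fin n → ℝ`. -/
noncomputable def egrad {n : ℕ} (f : EuclideanSpace ℝ (Fin n) → ℝ)
    (y : EuclideanSpace ℝ (Fin n)) : Fin n → ℝ :=
  fun i => fderiv ℝ f y (EuclideanSpace.single i 1)

/-- The `A`-gradient `∇_A f(y) = B̃(y)·∇f(y)`. -/
noncomputable def gradA {n : ℕ} (Bt : EuclideanSpace ℝ (Fin n) → Matrix (Fin n) (Fin n) ℝ)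
    (f : EuclideanSpace ℝ (Fin n) → ℝ) (y : EuclideanSpace ℝ (Fin n)) : Fin n → ℝ :=
  (Bt y).mulVec (egrad f y)

/-- Squared Euclidean norm of a vector. -/
noncomputable def sqnorm {n : ℕ} (v : Fin n → ℝ) : ℝ := ∑ i, v i ^ 2

/-- The weighted measure `dμ = w dx`. -/
noncomputable def wMeasure {n : ℕ} (w : EuclideanSpace ℝ (Fin n) → ℝ) :
    Measure (EuclideanSpace ℝ (Fin n)) :=
  volume.withDensity fun y => ENNReal.ofReal (w y)

/-- The truncation `v̄ = max{0, min{1, v}}`. -/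
noncomputable def clamp01 {n : ℕ} (v : EuclideanSpace ℝ (Fin n) → ℝ)
    (y : EuclideanSpace ℝ (Fin n)) : ℝ := max 0 (min 1 (v y))

/-- Lemma on proportional vanishing Poincaré / isoperimetric-type estimate:
assuming the proportional vanishing Poincaré inequality with constant `C_P` on `B(x,r)`,
if `v` is Lipschitz on `B(x,2r)`, `v̄ = max{0,min{1,v}}`,
`𝒜 = {v̄ = 0} ∩ B(x,r)`, `𝒞 = {v̄ = 1} ∩ B(x,r)`, `𝒟 = {0 < v̄ < 1} ∩ B(x,2r)`,
`∫_{B(x,3r/2)} |∇_A v̄|² dy ≤ (C₀/r²)·μ(𝒟)` and `μ(𝒜) ≥ μ(B(x,r))/2`, then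
`C₀·μ(𝒟) ≥ C₁·μ(𝒞)²/μ(B(x,r))` where `C₁ > 0` depends only on `C_P`. -/
theorem vanishing_poincare_isoperimetric (CP : ℝ) (hCP : 0 < CP) :
    ∃ C1 : ℝ, 0 < C1 ∧
    ∀ (n : ℕ), 1 ≤ n →
    ∀ (w : EuclideanSpace ℝ (Fin n) → ℝ), (∀ y, 0 ≤ w y) →
      LocallyIntegrable w volume →
    ∀ (Bt : EuclideanSpace ℝ (Fin n) → Matrix (Fin n) (Fin n) ℝ),
      (∀ i j, ∃ K : NNReal, LipschitzWith K fun y => Bt y i j) →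
    ∀ (x : EuclideanSpace ℝ (Fin n)) (r : ℝ), 0 < r →
    -- proportional vanishing Poincaré inequality on B(x,r):
    (∀ u : EuclideanSpace ℝ (Fin n) → ℝ,
      (∃ L : NNReal, LipschitzOnWith L u (ball x (3 * r / 2))) →
      ∀ E : Set (EuclideanSpace ℝ (Fin n)), MeasurableSet E → E ⊆ ball x r →
        wMeasure w (ball x r) / 2 ≤ wMeasure w E →
        (∀ y ∈ E, u y = 0) →
        ∫ y in ball x r, (u y) ^ 2 ∂(wMeasure w) ≤
          CP * r ^ 2 * ∫ y in ball x (3 * r / 2), sqnorm (gradA Bt u y)) →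
    ∀ (v : EuclideanSpace ℝ (Fin n) → ℝ),
      (∃ L : NNReal, LipschitzOnWith L v (ball x (2 * r))) →
    ∀ C0 : ℝ, 0 < C0 →
    (∫ y in ball x (3 * r / 2), sqnorm (gradA Bt (clamp01 v) y) ≤
      C0 / r ^ 2 *
        (wMeasure w {y | y ∈ ball x (2 * r) ∧ 0 < clamp01 v y ∧ clamp01 v y < 1}).toReal) →
    (wMeasure w (ball x r) / 2 ≤ wMeasure w {y | y ∈ ball x r ∧ clamp01 v y = 0}) →
    C1 * (wMeasure w {y | y ∈ ball x r ∧ clamp01 v y = 1}).toReal ^ 2 /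
        (wMeasure w (ball x r)).toReal ≤
      C0 * (wMeasure w {y | y ∈ ball x (2 * r) ∧ 0 < clamp01 v y ∧ clamp01 v y < 1}).toReal := by
  refine ⟨CP⁻¹, by positivity, ?_⟩
  intro n hn w hw hwloc Bt hBt x r hr hP v hv C0 hC0 hgrad hA
  obtain ⟨L, hL⟩ := hv
  obtain ⟨g, hg, hgeq⟩ := hL.extend_real
  set μ := wMeasure w with hμdef
  set cg : EuclideanSpace ℝ (Fin n) → ℝ := fun y => max 0 (min 1 (g y)) with hcg
  have hcont : Continuous cg := continuous_const.max (continuous_const.min hg.continuous)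
  have hsub2 : ball x r ⊆ ball x (2 * r) := ball_subset_ball (by linarith)
  have hceq : ∀ y ∈ ball x (2 * r), clamp01 v y = cg y := fun y hy => by
    simp only [clamp01, hcg, hgeq hy]
  -- the sets
  set C : Set (EuclideanSpace ℝ (Fin n)) := {y | y ∈ ball x r ∧ clamp01 v y = 1} with hCdef
  have hCsub : C ⊆ ball x r := fun y hy => hy.1
  have hMC : MeasurableSet C := by
    have : C = ball x r ∩ cg ⁻¹' {1} := by
      ext y
      simp only [hCdef, Set.mem_setOf_eq, Set.mem_inter_iff, Set.mem_preimage,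
        Set.mem_singleton_iff]
      exact ⟨fun h => ⟨h.1, by rw [← hceq y (hsub2 h.1)]; exact h.2⟩,
        fun h => ⟨h.1, by rw [hceq y (hsub2 h.1)]; exact h.2⟩⟩
    rw [this]
    exact measurableSet_ball.inter (hcont.measurable (measurableSet_singleton _))
  set E : Set (EuclideanSpace ℝ (Fin n)) := {y | y ∈ ball x r ∧ clamp01 v y = 0} with hEdef
  have hME : MeasurableSet E := by
    have : E = ball x r ∩ cg ⁻¹' {0} := by
      ext y
      simp only [hEdef, Set.mem_setOf_eq, Set.mem_inter_iff, Set.mem_preimage,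
        Set.mem_singleton_iff]
      exact ⟨fun h => ⟨h.1, by rw [← hceq y (hsub2 h.1)]; exact h.2⟩,
        fun h => ⟨h.1, by rw [hceq y (hsub2 h.1)]; exact h.2⟩⟩
    rw [this]
    exact measurableSet_ball.inter (hcont.measurable (measurableSet_singleton _))
  -- finiteness of μ (ball x r)
  have hfin : μ (ball x r) ≠ ⊤ := by
    have h1 : μ (ball x r) = ∫⁻ y in ball x r, ENNReal.ofReal (w y) ∂volume :=
      withDensity_apply _ measurableSet_ball
    have h2 : IntegrableOn w (closedBall x r) volume :=
      hwloc.integrableOn_isCompact (isCompact_closedBall x r)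
    have h3 : ∫⁻ y in ball x r, ENNReal.ofReal (w y) ∂volume ≤
        ∫⁻ y in closedBall x r, (‖w y‖₊ : ℝ≥0∞) ∂volume := by
      refine le_trans (lintegral_mono fun y => ?_) (lintegral_mono_set ball_subset_closedBall)
      exact (Real.enorm_eq_ofReal (hw y)).symm.le
    rw [h1]
    exact (h3.trans_lt h2.2).ne
  -- Lipschitz of the truncation
  have hLip : ∃ L' : NNReal, LipschitzOnWith L' (clamp01 v) (ball x (3 * r / 2)) := by
    refine ⟨1 * L, ?_⟩
    have h1 : LipschitzOnWith L v (ball x (3 * r / 2)) := hL.mono (ball_subset_ball (by linarith))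
    exact ((LipschitzWith.id.const_min 1).const_max 0).comp_lipschitzOnWith h1
  -- apply the Poincaré inequality
  have hPapp := hP (clamp01 v) hLip E hME (fun y hy => hy.1) hA (fun y hy => hy.2)
  set D := (μ {y | y ∈ ball x (2 * r) ∧ 0 < clamp01 v y ∧ clamp01 v y < 1}).toReal with hDdef
  have hD0 : 0 ≤ D := ENNReal.toReal_nonneg
  have key : ∫ y in ball x r, (clamp01 v y) ^ 2 ∂μ ≤ CP * C0 * D := by
    have h1 : CP * r ^ 2 * (∫ y in ball x (3 * r / 2), sqnorm (gradA Bt (clamp01 v) y)) ≤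
        CP * r ^ 2 * (C0 / r ^ 2 * D) :=
      mul_le_mul_of_nonneg_left hgrad (by positivity)
    have h2 : CP * r ^ 2 * (C0 / r ^ 2 * D) = CP * C0 * D := by
      field_simp
    linarith [hPapp]
  -- lower bound of the integral
  have hIeq : ∫ y in ball x r, (clamp01 v y) ^ 2 ∂μ = ∫ y in ball x r, (cg y) ^ 2 ∂μ :=
    setIntegral_congr_fun measurableSet_ball (fun y hy => by rw [hceq y (hsub2 hy)])
  have hint : IntegrableOn (fun y => (cg y) ^ 2) (ball x r) μ := by
    refine Measure.integrableOn_of_bounded hfin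
      ((hcont.pow 2).aestronglyMeasurable) (M := 1) ?_
    filter_upwards with y
    rw [Real.norm_eq_abs, abs_of_nonneg (by positivity)]
    have h1 : cg y ≤ 1 := max_le (by norm_num) (min_le_left _ _)
    have h2 : 0 ≤ cg y := le_max_left _ _
    nlinarith
  have hlow : (μ C).toReal ≤ ∫ y in ball x r, (cg y) ^ 2 ∂μ := by
    have h1 : ∫ y in C, (cg y) ^ 2 ∂μ = (μ C).toReal := by
      rw [setIntegral_congr_fun hMC (g := fun _ => (1 : ℝ)) (fun y hy => by
        rw [← hceq y (hsub2 hy.1), hy.2]; norm_num), setIntegral_const]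
      simp
      rfl
    rw [← h1]
    refine setIntegral_mono_set hint ?_ (HasSubset.Subset.eventuallyLE hCsub)
    filter_upwards with y using by positivity
  -- assemble
  set mC := (μ C).toReal with hmC
  set mB := (μ (ball x r)).toReal with hmB
  have hCB : mC ≤ mB := ENNReal.toReal_mono hfin (measure_mono hCsub)
  have hC0' : 0 ≤ mC := ENNReal.toReal_nonneg
  have hkey : mC ≤ CP * C0 * D := by
    calc mC ≤ ∫ y in ball x r, (cg y) ^ 2 ∂μ := hlow
    _ = ∫ y in ball x r, (clamp01 v y) ^ 2 ∂μ := hIeq.symm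
    _ ≤ CP * C0 * D := key
  rcases eq_or_lt_of_le (ENNReal.toReal_nonneg : (0:ℝ) ≤ mB) with hB | hB
  · have : mC = 0 := le_antisymm (hB ▸ hCB) hC0'
    rw [this]
    simp
    positivity
  · rw [div_le_iff₀ hB]
    have h1 : CP⁻¹ * mC ≤ C0 * D := by
      rw [inv_mul_le_iff₀ hCP]
      linarith [hkey]
    nlinarith [mul_le_mul_of_nonneg_right h1 (le_of_lt hB),
      mul_le_mul_of_nonneg_left hCB (mul_nonneg (le_of_lt (inv_pos.2 hCP)) hC0')]
end

section
/- Let k ≥ 1 be an integer and N > 1 a real number. Define for t large: Φ(t) = t²·(ln t²)²·(ln^{(2)} t²)²⋯(ln^{(k−1)} t²)²·(ln^{(k)} t²)^{2N}, Ψ(t) = t·(ln t²)·(ln^{(2)} t²)⋯(ln^{(k−1)} t²)·(ln^{(k)} t²)^{N} (so Ψ = √Φ), and H(t) = t²·(ln t)·(ln^{(2)} t)⋯(ln^{(k−1)} t)·(ln^{(k)} t)^{N}. Then there exist constants c, C, t₀ > 0 depending only on k and N such that c·Φ(t) ≤ Ψ(H(t)) ≤ C·Φ(t) for all t ≥ t₀.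 -/
/-- `Φ(t) = t²·(ln t²)²·(ln^[2] t²)²⋯(ln^[k-1] t²)²·(ln^[k] t²)^(2N)`. -/
noncomputable def PhiKN (k : ℕ) (N : ℝ) (t : ℝ) : ℝ :=
  t ^ 2 * (∏ i ∈ Finset.Ico 1 k, (Real.log^[i] (t ^ 2)) ^ 2) *
    (Real.log^[k] (t ^ 2)) ^ (2 * N)

/-- `Ψ(t) = t·(ln t²)·(ln^[2] t²)⋯(ln^[k-1] t²)·(ln^[k] t²)^N`, so `Ψ = √Φ`. -/
noncomputable def PsiKN (k : ℕ) (N : ℝ) (t : ℝ) : ℝ :=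
  t * (∏ i ∈ Finset.Ico 1 k, Real.log^[i] (t ^ 2)) * (Real.log^[k] (t ^ 2)) ^ N

/-- `H(t) = t²·(ln t)·(ln^[2] t)⋯(ln^[k-1] t)·(ln^[k] t)^N`. -/
noncomputable def HKN (k : ℕ) (N : ℝ) (t : ℝ) : ℝ :=
  t ^ 2 * (∏ i ∈ Finset.Ico 1 k, Real.log^[i] t) * (Real.log^[k] t) ^ N


open Real Filter

lemma le_exp_iter (n : ℕ) (x : ℝ) : x ≤ Real.exp^[n] x := by
  induction n with
  | zero => simp
  | succ n ih =>
    rw [Function.iterate_succ_apply']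
    linarith [Real.add_one_le_exp (Real.exp^[n] x)]

lemma exp_iter_mono (n : ℕ) : Monotone (Real.exp^[n]) :=
  Real.exp_monotone.iterate n

lemma log_iter_ge_one : ∀ (j : ℕ) (x : ℝ), Real.exp^[j] 1 ≤ x → 1 ≤ Real.log^[j] x := by
  intro j
  induction j with
  | zero => intro x hx; simpa using hx
  | succ j ih =>
    intro x hx
    rw [Function.iterate_succ_apply]
    apply ih
    have h1 : Real.exp^[j+1] 1 = Real.exp (Real.exp^[j] 1) := Function.iterate_succ_apply' _ _ _
    have hx0 : (0:ℝ) < Real.exp (Real.exp^[j] 1) := Real.exp_pos _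
    calc Real.exp^[j] 1 = Real.log (Real.exp (Real.exp^[j] 1)) := (Real.log_exp _).symm
      _ ≤ Real.log x := Real.log_le_log hx0 (h1 ▸ hx)

lemma log_iter_mono : ∀ (j : ℕ) (x y : ℝ), Real.exp^[j] 1 ≤ x → x ≤ y →
    Real.log^[j] x ≤ Real.log^[j] y := by
  intro j
  induction j with
  | zero => intro x y _ h; simpa using h
  | succ j ih =>
    intro x y hx hxy
    rw [Function.iterate_succ_apply, Function.iterate_succ_apply]
    have h1 : Real.exp^[j+1] 1 = Real.exp (Real.exp^[j] 1) := Function.iterate_succ_apply' _ _ _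
    have hlx : Real.exp^[j] 1 ≤ Real.log x := by
      calc Real.exp^[j] 1 = Real.log (Real.exp (Real.exp^[j] 1)) := (Real.log_exp _).symm
        _ ≤ Real.log x := Real.log_le_log (Real.exp_pos _) (h1 ▸ hx)
    have hx0 : (0:ℝ) < x := lt_of_lt_of_le (Real.exp_pos _) (h1 ▸ hx)
    exact ih _ _ hlx (Real.log_le_log hx0 hxy)

lemma log_iter_le_self : ∀ (j : ℕ) (x : ℝ), Real.exp^[j] 1 ≤ x → Real.log^[j] x ≤ x := by
  intro j
  induction j with
  | zero => intro x _; simp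
  | succ j ih =>
    intro x hx
    rw [Function.iterate_succ_apply]
    have h1 : Real.exp^[j+1] 1 = Real.exp (Real.exp^[j] 1) := Function.iterate_succ_apply' _ _ _
    have hlx : Real.exp^[j] 1 ≤ Real.log x := by
      calc Real.exp^[j] 1 = Real.log (Real.exp (Real.exp^[j] 1)) := (Real.log_exp _).symm
        _ ≤ Real.log x := Real.log_le_log (Real.exp_pos _) (h1 ▸ hx)
    have hx0 : (0:ℝ) ≤ x := le_trans (Real.exp_pos _).le (h1 ▸ hx)
    exact le_trans (le_trans (ih _ hlx) (Real.log_le_self hx0)) le_rfl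

lemma log_iter_two_mul : ∀ (j : ℕ) (x : ℝ), Real.exp^[j] 2 ≤ x →
    Real.log^[j] (2 * x) ≤ 2 * Real.log^[j] x := by
  intro j
  induction j with
  | zero => intro x _; simp
  | succ j ih =>
    intro x hx
    have h2 : (2:ℝ) ≤ Real.exp^[j+1] 2 := le_exp_iter _ _
    have hx2 : (2:ℝ) ≤ x := le_trans h2 hx
    have hx0 : (0:ℝ) < x := by linarith
    have h1 : Real.exp^[j+1] 2 = Real.exp (Real.exp^[j] 2) := Function.iterate_succ_apply' _ _ _
    have hlx : Real.exp^[j] 2 ≤ Real.log x := by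
      calc Real.exp^[j] 2 = Real.log (Real.exp (Real.exp^[j] 2)) := (Real.log_exp _).symm
        _ ≤ Real.log x := Real.log_le_log (Real.exp_pos _) (h1 ▸ hx)
    have h2j : (2:ℝ) ≤ Real.exp^[j] 2 := le_exp_iter _ _
    have hlog2 : Real.log 2 ≤ Real.log x := Real.log_le_log two_pos hx2
    have hlogxlarge : (2:ℝ) ≤ Real.log x := le_trans h2j hlx
    rw [Function.iterate_succ_apply, Function.iterate_succ_apply]
    have hlog2x : Real.log (2 * x) = Real.log 2 + Real.log x :=
      Real.log_mul two_ne_zero (ne_of_gt hx0)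
    rw [hlog2x]
    have hd1 : Real.exp^[j] 1 ≤ Real.log 2 + Real.log x := by
      have : Real.exp^[j] 1 ≤ Real.exp^[j] 2 := exp_iter_mono j (by norm_num)
      have hl2 : (0:ℝ) ≤ Real.log 2 := Real.log_nonneg (by norm_num)
      linarith
    have step1 : Real.log^[j] (Real.log 2 + Real.log x) ≤ Real.log^[j] (2 * Real.log x) := by
      apply log_iter_mono j _ _ hd1
      have : Real.log 2 ≤ Real.log x := hlog2
      linarith
    have step2 : Real.log^[j] (2 * Real.log x) ≤ 2 * Real.log^[j] (Real.log x) := ih _ hlx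
    linarith

lemma log_iter_four_mul (j : ℕ) (x : ℝ) (hx : Real.exp^[j] 2 ≤ x) :
    Real.log^[j] (4 * x) ≤ 4 * Real.log^[j] x := by
  have h2 : (2:ℝ) ≤ Real.exp^[j] 2 := le_exp_iter _ _
  have hx0 : (0:ℝ) < x := by linarith
  have h4 : (4:ℝ) * x = 2 * (2 * x) := by ring
  have hx2 : Real.exp^[j] 2 ≤ 2 * x := by linarith
  have s1 : Real.log^[j] (2 * (2*x)) ≤ 2 * Real.log^[j] (2*x) := log_iter_two_mul j _ hx2
  have s2 : Real.log^[j] (2 * x) ≤ 2 * Real.log^[j] x := log_iter_two_mul j _ hx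
  rw [h4]
  linarith

/-- For `k ≥ 1` and `N > 1` there exist `c, C, t₀ > 0` depending only on `k, N`
such that `c·Φ(t) ≤ Ψ(H(t)) ≤ C·Φ(t)` for all `t ≥ t₀`. -/
theorem Psi_comp_H_comparable_Phi
    (k : ℕ) (hk : 1 ≤ k) (N : ℝ) (hN : 1 < N) :
    ∃ c : ℝ, 0 < c ∧ ∃ C : ℝ, 0 < C ∧ ∃ t₀ : ℝ, 0 < t₀ ∧
      ∀ t, t₀ ≤ t →
        c * PhiKN k N t ≤ PsiKN k N (HKN k N t) ∧
        PsiKN k N (HKN k N t) ≤ C * PhiKN k N t := by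
  have hN0 : (0:ℝ) ≤ N := by linarith
  set M : ℝ := ((k - 1 : ℕ) : ℝ) + N with hMdef
  have hbound : ∀ᶠ x : ℝ in Filter.atTop, (Real.log x) ^ M ≤ x := by
    have h := (isLittleO_log_rpow_rpow_atTop M one_pos).bound one_pos
    filter_upwards [h, Filter.eventually_ge_atTop (1:ℝ)] with x hx hx1
    have hx' : ‖Real.log x ^ M‖ ≤ 1 * ‖x ^ (1:ℝ)‖ := hx
    rw [one_mul, Real.rpow_one, Real.norm_eq_abs, Real.norm_eq_abs] at hx'
    calc Real.log x ^ M ≤ |Real.log x ^ M| := le_abs_self _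
      _ ≤ |x| := hx'
      _ = x := abs_of_nonneg (by linarith)
  obtain ⟨M₀, hM₀⟩ := Filter.eventually_atTop.mp hbound
  refine ⟨((2:ℝ)^(k-1) * (2:ℝ)^N)⁻¹, by positivity,
    (4:ℝ)^(k-1) * (4:ℝ)^N, by positivity,
    max (Real.exp^[k+1] 9) (max M₀ 1), ?_, ?_⟩
  · exact lt_of_lt_of_le one_pos (le_trans (le_max_right _ _) (le_max_right _ _))
  intro t ht
  have ht1 : (1:ℝ) ≤ t := le_trans (le_trans (le_max_right _ _) (le_max_right _ _)) ht
  have ht0 : (0:ℝ) < t := by linarith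
  have hta : t ≤ t ^ 2 := by nlinarith
  have htM : M₀ ≤ t := le_trans (le_trans (le_max_left _ _) (le_max_right _ _)) ht
  have hexps : ∀ j, j ≤ k + 1 → ∀ c' : ℝ, c' ≤ 9 → Real.exp^[j] c' ≤ t := by
    intro j hj c' hc'
    have h1 : Real.exp^[j] c' ≤ Real.exp^[j] 9 := exp_iter_mono j hc'
    have h2 : Real.exp^[j] 9 ≤ Real.exp^[k+1] 9 := by
      obtain ⟨m, hm⟩ : ∃ m, k + 1 = m + j := ⟨k + 1 - j, by omega⟩
      rw [hm, Function.iterate_add_apply]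
      exact le_exp_iter m _
    exact le_trans (le_trans h1 h2) (le_trans (le_max_left _ _) ht)
  have hexpa : ∀ j, j ≤ k + 1 → ∀ c' : ℝ, c' ≤ 9 → Real.exp^[j] c' ≤ t ^ 2 :=
    fun j hj c' hc' => le_trans (hexps j hj c' hc') hta
  have hlogdom : ∀ j, j ≤ k → ∀ c' : ℝ, c' ≤ 9 → Real.exp^[j] c' ≤ Real.log t := by
    intro j hj c' hc'
    have h := hexps (j+1) (by omega) c' hc'
    rw [Function.iterate_succ_apply'] at h
    calc Real.exp^[j] c' = Real.log (Real.exp (Real.exp^[j] c')) := (Real.log_exp _).symm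
      _ ≤ Real.log t := Real.log_le_log (Real.exp_pos _) h
  have hlogdoma : ∀ j, j ≤ k → ∀ c' : ℝ, c' ≤ 9 → Real.exp^[j] c' ≤ Real.log (t ^ 2) := by
    intro j hj c' hc'
    have h := hexpa (j+1) (by omega) c' hc'
    rw [Function.iterate_succ_apply'] at h
    calc Real.exp^[j] c' = Real.log (Real.exp (Real.exp^[j] c')) := (Real.log_exp _).symm
      _ ≤ Real.log (t ^ 2) := Real.log_le_log (Real.exp_pos _) h
  have hone_t : ∀ i, i ≤ k → 1 ≤ Real.log^[i] t :=
    fun i hi => log_iter_ge_one i t (hexps i (by omega) 1 (by norm_num))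
  have hone_a : ∀ i, i ≤ k → 1 ≤ Real.log^[i] (t ^ 2) :=
    fun i hi => log_iter_ge_one i (t^2) (hexpa i (by omega) 1 (by norm_num))
  have hsq_lo : ∀ i, i ≤ k → Real.log^[i] t ≤ Real.log^[i] (t ^ 2) :=
    fun i hi => log_iter_mono i t (t^2) (hexps i (by omega) 1 (by norm_num)) hta
  have hsq_up : ∀ i, 1 ≤ i → i ≤ k → Real.log^[i] (t ^ 2) ≤ 2 * Real.log^[i] t := by
    intro i h1 h2
    obtain ⟨j, rfl⟩ : ∃ j, i = j + 1 := ⟨i - 1, by omega⟩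
    rw [Function.iterate_succ_apply, Function.iterate_succ_apply]
    have hlt2 : Real.log (t ^ 2) = 2 * Real.log t := by
      rw [Real.log_pow]; push_cast; ring
    rw [hlt2]
    exact log_iter_two_mul j _ (hlogdom j (by omega) 2 (by norm_num))
  have h4_up : ∀ i, 1 ≤ i → i ≤ k →
      Real.log^[i] ((t ^ 2) ^ 4) ≤ 4 * Real.log^[i] (t ^ 2) := by
    intro i h1 h2
    obtain ⟨j, rfl⟩ : ∃ j, i = j + 1 := ⟨i - 1, by omega⟩
    rw [Function.iterate_succ_apply, Function.iterate_succ_apply]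
    have hlt4 : Real.log ((t ^ 2) ^ 4) = 4 * Real.log (t ^ 2) := by
      rw [Real.log_pow]; push_cast; ring
    rw [hlt4]
    exact log_iter_four_mul j _ (hlogdoma j (by omega) 2 (by norm_num))
  -- abbreviations
  set Pt : ℝ := ∏ i ∈ Finset.Ico 1 k, Real.log^[i] t with hPtdef
  set Pa : ℝ := ∏ i ∈ Finset.Ico 1 k, Real.log^[i] (t ^ 2) with hPadef
  set Qt : ℝ := Real.log^[k] t with hQtdef
  set Qa : ℝ := Real.log^[k] (t ^ 2) with hQadef
  have one_le_prod : ∀ f : ℕ → ℝ, (∀ i ∈ Finset.Ico 1 k, (1:ℝ) ≤ f i) →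
      (1:ℝ) ≤ ∏ i ∈ Finset.Ico 1 k, f i := by
    intro f hf
    have := Finset.prod_le_prod (f := fun _ => (1:ℝ)) (g := f)
      (fun i _ => zero_le_one) hf
    simpa using this
  have hPt1 : 1 ≤ Pt := one_le_prod _ fun i hi =>
    hone_t i (le_of_lt (Finset.mem_Ico.mp hi).2)
  have hPa1 : 1 ≤ Pa := one_le_prod _ fun i hi =>
    hone_a i (le_of_lt (Finset.mem_Ico.mp hi).2)
  have hQt1 : 1 ≤ Qt := hone_t k le_rfl
  have hQa1 : 1 ≤ Qa := hone_a k le_rfl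
  have hPtPa : Pt ≤ Pa := Finset.prod_le_prod
    (fun i hi => by linarith [hone_t i (le_of_lt (Finset.mem_Ico.mp hi).2)])
    (fun i hi => hsq_lo i (le_of_lt (Finset.mem_Ico.mp hi).2))
  have hPa2 : Pa ≤ 2 ^ (k - 1) * Pt := by
    have h1 : Pa ≤ ∏ i ∈ Finset.Ico 1 k, (2 * Real.log^[i] t) :=
      Finset.prod_le_prod
        (fun i hi => by linarith [hone_a i (le_of_lt (Finset.mem_Ico.mp hi).2)])
        (fun i hi => hsq_up i (Finset.mem_Ico.mp hi).1 (le_of_lt (Finset.mem_Ico.mp hi).2))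
    have h2 : ∏ i ∈ Finset.Ico 1 k, (2 * Real.log^[i] t) = 2 ^ (k - 1) * Pt := by
      rw [Finset.prod_mul_distrib, Finset.prod_const, Nat.card_Ico]
    linarith [h2 ▸ h1]
  have hQtQa : Qt ≤ Qa := hsq_lo k le_rfl
  have hQa2 : Qa ≤ 2 * Qt := hsq_up k hk le_rfl
  -- upper bound on the log-correction of H
  have hlogt1 : (1:ℝ) ≤ Real.log t := by
    have := hlogdom 0 (by omega) 1 (by norm_num); simpa using this
  have hle_logt : ∀ i, 1 ≤ i → i ≤ k → Real.log^[i] t ≤ Real.log t := by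
    intro i h1 h2
    obtain ⟨j, rfl⟩ : ∃ j, i = j + 1 := ⟨i - 1, by omega⟩
    rw [Function.iterate_succ_apply]
    exact log_iter_le_self j _ (hlogdom j (by omega) 1 (by norm_num))
  have hsmall : Pt * Qt ^ N ≤ t ^ 2 := by
    have hPtle : Pt ≤ (Real.log t) ^ (k - 1) := by
      have h1 : Pt ≤ ∏ _i ∈ Finset.Ico 1 k, Real.log t :=
        Finset.prod_le_prod
          (fun i hi => by linarith [hone_t i (le_of_lt (Finset.mem_Ico.mp hi).2)])
          (fun i hi => hle_logt i (Finset.mem_Ico.mp hi).1 (le_of_lt (Finset.mem_Ico.mp hi).2))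
      have h2 : ∏ _i ∈ Finset.Ico 1 k, Real.log t = (Real.log t) ^ (k - 1) := by
        rw [Finset.prod_const, Nat.card_Ico]
      linarith [h2 ▸ h1]
    have hQtN : Qt ^ N ≤ (Real.log t) ^ N :=
      Real.rpow_le_rpow (by linarith) (hle_logt k hk le_rfl) hN0
    calc Pt * Qt ^ N ≤ (Real.log t) ^ (k - 1) * (Real.log t) ^ N :=
        mul_le_mul hPtle hQtN (Real.rpow_nonneg (by linarith) N) (by positivity)
      _ = (Real.log t) ^ M := by
        rw [hMdef, ← Real.rpow_natCast (Real.log t) (k - 1),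
          ← Real.rpow_add (by linarith : (0:ℝ) < Real.log t)]
      _ ≤ t := hM₀ t htM
      _ ≤ t ^ 2 := hta
  -- bounds for H
  have hQtN1 : (1:ℝ) ≤ Qt ^ N := Real.one_le_rpow hQt1 hN0
  have hQtN0 : (0:ℝ) ≤ Qt ^ N := by linarith
  have hH_eq : HKN k N t = t ^ 2 * Pt * Qt ^ N := rfl
  have ht2_1 : (1:ℝ) ≤ t ^ 2 := by nlinarith
  have hH_ge_a : t ^ 2 ≤ HKN k N t := by
    rw [hH_eq]; nlinarith [mul_le_mul hPt1 hQtN1 (by norm_num : (0:ℝ) ≤ 1) (by linarith : (0:ℝ) ≤ Pt)]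
  have hH_le : HKN k N t ≤ (t ^ 2) ^ 2 := by
    rw [hH_eq, mul_assoc]
    calc t ^ 2 * (Pt * Qt ^ N) ≤ t ^ 2 * t ^ 2 :=
        mul_le_mul_of_nonneg_left hsmall (by positivity)
      _ = (t ^ 2) ^ 2 := by ring
  set H : ℝ := HKN k N t with hHdef
  have hH1 : (1:ℝ) ≤ H := le_trans ht2_1 hH_ge_a
  have hH0 : (0:ℝ) ≤ H := by linarith
  have hH2_ge : t ^ 2 ≤ H ^ 2 := le_trans hH_ge_a (by nlinarith)
  have hH2_le : H ^ 2 ≤ (t ^ 2) ^ 4 := by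
    calc H ^ 2 ≤ ((t ^ 2) ^ 2) ^ 2 := pow_le_pow_left₀ hH0 hH_le 2
      _ = (t ^ 2) ^ 4 := by ring
  -- iterated-log bounds at H^2
  have hHi_lo : ∀ i, i ≤ k → Real.log^[i] (t ^ 2) ≤ Real.log^[i] (H ^ 2) :=
    fun i hi => log_iter_mono i _ _ (hexpa i (by omega) 1 (by norm_num)) hH2_ge
  have hHi_up : ∀ i, 1 ≤ i → i ≤ k → Real.log^[i] (H ^ 2) ≤ 4 * Real.log^[i] (t ^ 2) := by
    intro i h1 h2
    have s1 : Real.log^[i] (H ^ 2) ≤ Real.log^[i] ((t ^ 2) ^ 4) :=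
      log_iter_mono i _ _ (le_trans (hexpa i (by omega) 1 (by norm_num)) hH2_ge) hH2_le
    exact le_trans s1 (h4_up i h1 h2)
  set PH : ℝ := ∏ i ∈ Finset.Ico 1 k, Real.log^[i] (H ^ 2) with hPHdef
  set QH : ℝ := Real.log^[k] (H ^ 2) with hQHdef
  have hPaPH : Pa ≤ PH := Finset.prod_le_prod
    (fun i hi => by linarith [hone_a i (le_of_lt (Finset.mem_Ico.mp hi).2)])
    (fun i hi => hHi_lo i (le_of_lt (Finset.mem_Ico.mp hi).2))
  have hPH4 : PH ≤ 4 ^ (k - 1) * Pa := by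
    have h1 : PH ≤ ∏ i ∈ Finset.Ico 1 k, (4 * Real.log^[i] (t ^ 2)) :=
      Finset.prod_le_prod
        (fun i hi => by
          have := hone_a i (le_of_lt (Finset.mem_Ico.mp hi).2)
          have := hHi_lo i (le_of_lt (Finset.mem_Ico.mp hi).2)
          linarith)
        (fun i hi => hHi_up i (Finset.mem_Ico.mp hi).1 (le_of_lt (Finset.mem_Ico.mp hi).2))
    have h2 : ∏ i ∈ Finset.Ico 1 k, (4 * Real.log^[i] (t ^ 2)) = 4 ^ (k - 1) * Pa := by
      rw [Finset.prod_mul_distrib, Finset.prod_const, Nat.card_Ico]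
    linarith [h2 ▸ h1]
  have hQaQH : Qa ≤ QH := hHi_lo k le_rfl
  have hQH4 : QH ≤ 4 * Qa := hHi_up k hk le_rfl
  have hQa0 : (0:ℝ) ≤ Qa := by linarith
  have hQH0 : (0:ℝ) ≤ QH := le_trans hQa0 hQaQH
  have hQaN0 : (0:ℝ) ≤ Qa ^ N := Real.rpow_nonneg hQa0 N
  have hQHN_lo : Qa ^ N ≤ QH ^ N := Real.rpow_le_rpow hQa0 hQaQH hN0
  have hQHN_up : QH ^ N ≤ 4 ^ N * Qa ^ N := by
    calc QH ^ N ≤ (4 * Qa) ^ N := Real.rpow_le_rpow hQH0 hQH4 hN0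
      _ = 4 ^ N * Qa ^ N := Real.mul_rpow (by norm_num) hQa0
  have hQHN0 : (0:ℝ) ≤ QH ^ N := Real.rpow_nonneg hQH0 N
  -- Psi(H) and Phi expressions
  have hPsi_eq : PsiKN k N H = H * PH * QH ^ N := rfl
  have hPhi_eq : PhiKN k N t = t ^ 2 * Pa ^ 2 * (Qa ^ N * Qa ^ N) := by
    simp only [PhiKN]
    rw [Finset.prod_pow, two_mul, Real.rpow_add (by linarith : (0:ℝ) < Qa)]
  have hPa0 : (0:ℝ) ≤ Pa := by linarith
  have hPH0 : (0:ℝ) ≤ PH := le_trans hPa0 hPaPH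
  -- H vs t^2 * Pa * Qa^N
  have hHup : H ≤ t ^ 2 * Pa * Qa ^ N := by
    rw [hH_eq]
    have h1 : t ^ 2 * Pt ≤ t ^ 2 * Pa := mul_le_mul_of_nonneg_left hPtPa (by positivity)
    have h2 : Qt ^ N ≤ Qa ^ N := Real.rpow_le_rpow (by linarith) hQtQa hN0
    exact mul_le_mul h1 h2 hQtN0 (by positivity)
  have hHlo : t ^ 2 * Pa * Qa ^ N ≤ (2 ^ (k - 1) * 2 ^ N) * H := by
    rw [hH_eq]
    have h1 : t ^ 2 * Pa ≤ t ^ 2 * (2 ^ (k - 1) * Pt) :=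
      mul_le_mul_of_nonneg_left hPa2 (by positivity)
    have h2 : Qa ^ N ≤ 2 ^ N * Qt ^ N := by
      calc Qa ^ N ≤ (2 * Qt) ^ N := Real.rpow_le_rpow hQa0 hQa2 hN0
        _ = 2 ^ N * Qt ^ N := Real.mul_rpow (by norm_num) (by linarith)
    calc t ^ 2 * Pa * Qa ^ N ≤ (t ^ 2 * (2 ^ (k - 1) * Pt)) * (2 ^ N * Qt ^ N) :=
        mul_le_mul h1 h2 hQaN0 (by positivity)
      _ = (2 ^ (k - 1) * 2 ^ N) * (t ^ 2 * Pt * Qt ^ N) := by ring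
  constructor
  · -- lower bound
    rw [inv_mul_le_iff₀ (by positivity), hPhi_eq, hPsi_eq]
    have h1 : H * Pa ≤ H * PH := mul_le_mul_of_nonneg_left hPaPH hH0
    have h2 : H * Pa * Qa ^ N ≤ H * PH * QH ^ N :=
      mul_le_mul h1 hQHN_lo hQaN0 (by positivity)
    calc t ^ 2 * Pa ^ 2 * (Qa ^ N * Qa ^ N)
        = (t ^ 2 * Pa * Qa ^ N) * Pa * Qa ^ N := by ring
      _ ≤ ((2 ^ (k - 1) * 2 ^ N) * H) * Pa * Qa ^ N := by
          have := mul_le_mul_of_nonneg_right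
            (mul_le_mul_of_nonneg_right hHlo hPa0) hQaN0
          exact this
      _ = (2 ^ (k - 1) * 2 ^ N) * (H * Pa * Qa ^ N) := by ring
      _ ≤ (2 ^ (k - 1) * 2 ^ N) * (H * PH * QH ^ N) := by
          apply mul_le_mul_of_nonneg_left h2 (by positivity)
  · -- upper bound
    rw [hPsi_eq, hPhi_eq]
    have h1 : H * PH ≤ (t ^ 2 * Pa * Qa ^ N) * (4 ^ (k - 1) * Pa) :=
      mul_le_mul hHup hPH4 hPH0 (by positivity)
    calc H * PH * QH ^ N ≤ ((t ^ 2 * Pa * Qa ^ N) * (4 ^ (k - 1) * Pa)) * (4 ^ N * Qa ^ N) :=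
        mul_le_mul h1 hQHN_up hQHN0 (by positivity)
      _ = (4 ^ (k - 1) * 4 ^ N) * (t ^ 2 * Pa ^ 2 * (Qa ^ N * Qa ^ N)) := by ring
end

section
/- Let k ≥ 1 be an integer and N > 1 a real number, and define for t with t² ≥ exp^{(k)}(2N): Ψ(t) = t·(ln t²)·(ln^{(2)} t²)⋯(ln^{(k−1)} t²)·(ln^{(k)} t²)^{N}. Then there exist constants c, C, t₀ > 0 depending only on k and N such that for all t ≥ t₀, writing s = Ψ(t), one has c·s/((ln s)·(ln^{(2)} s)⋯(ln^{(k−1)} s)·(ln^{(k)} s)^{N}) ≤ t ≤ C·s/((ln s)·(ln^{(2)} s)⋯(ln^{(k−1)} s)·(ln^{(k)} s)^{N}). -/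
open Filter

private lemma tendsto_iterlog (j : ℕ) :
    Tendsto (fun x : ℝ => Real.log^[j] x) atTop atTop := by
  induction j with
  | zero => exact tendsto_id (α := ℝ)
  | succ n ih =>
      simp only [Function.iterate_succ', Function.comp]
      exact Real.tendsto_log_atTop.comp ih

private lemma key_bounds (k : ℕ) (hk : 1 ≤ k) (N : ℝ) (hN : 1 < N) (t : ℝ)
    (h1 : ∀ j, j ≤ k + 1 → 2 ≤ Real.log^[j] (t ^ 2))
    (h2 : ((k : ℝ) - 1 + N) * Real.log^[2] (t ^ 2) ≤ Real.log t)
    (ht : 1 ≤ t) :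
    ∀ i, 1 ≤ i → i ≤ k →
      (1 / 2) * Real.log^[i] (t ^ 2) ≤ Real.log^[i] (PsiKN k N t) ∧
      Real.log^[i] (PsiKN k N t) ≤ Real.log^[i] (t ^ 2) := by
  set L : ℕ → ℝ := fun j => Real.log^[j] (t ^ 2) with hL
  have hLsucc : ∀ j, L (j + 1) = Real.log (L j) := fun j =>
    Function.iterate_succ_apply' Real.log j (t ^ 2)
  have hLpos : ∀ j, j ≤ k + 1 → 0 < L j := fun j hj => lt_of_lt_of_le two_pos (h1 j hj)
  -- decreasing chain: L j ≤ L 2 for 2 ≤ j ≤ k+1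
  have hdec : ∀ m, 2 + m ≤ k + 1 → L (2 + m) ≤ L 2 := by
    intro m
    induction m with
    | zero => simp
    | succ n ih =>
        intro hmn
        have h2n : 2 + n ≤ k + 1 := by omega
        have : L (2 + (n + 1)) = Real.log (L (2 + n)) := by
          rw [show 2 + (n + 1) = (2 + n) + 1 by omega, hLsucc]
        rw [this]
        exact le_trans (Real.log_le_self (hLpos _ h2n).le) (ih h2n)
  have hdec' : ∀ j, 2 ≤ j → j ≤ k + 1 → L j ≤ L 2 := by
    intro j hj2 hjk
    have := hdec (j - 2) (by omega)
    rwa [show 2 + (j - 2) = j by omega] at this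
  -- positivity of the pieces
  have htpos : 0 < t := lt_of_lt_of_le one_pos ht
  have hPpos : 0 < ∏ i ∈ Finset.Ico 1 k, L i :=
    Finset.prod_pos fun i hi => hLpos i (by simp at hi; omega)
  have hQpos : 0 < L k ^ N := Real.rpow_pos_of_pos (hLpos k (by omega)) N
  have hspos : 0 < PsiKN k N t := by
    unfold PsiKN
    exact mul_pos (mul_pos htpos hPpos) hQpos
  -- log of s
  have hlogs : Real.log (PsiKN k N t)
      = Real.log t + ((∑ i ∈ Finset.Ico 1 k, L (i + 1)) + N * L (k + 1)) := by
    unfold PsiKN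
    rw [Real.log_mul (by positivity) (ne_of_gt hQpos),
      Real.log_mul (ne_of_gt htpos) (ne_of_gt hPpos),
      Real.log_prod (fun i hi => ne_of_gt (hLpos i (by simp at hi; omega))),
      Real.log_rpow (hLpos k (by omega))]
    rw [hLsucc k]
    have : ∑ i ∈ Finset.Ico 1 k, Real.log (L i) = ∑ i ∈ Finset.Ico 1 k, L (i + 1) :=
      Finset.sum_congr rfl fun i _ => (hLsucc i).symm
    rw [this]; ring
  -- bounds on the extra term
  have hE0 : 0 ≤ (∑ i ∈ Finset.Ico 1 k, L (i + 1)) + N * L (k + 1) := by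
    have h1' : 0 ≤ ∑ i ∈ Finset.Ico 1 k, L (i + 1) :=
      Finset.sum_nonneg fun i hi => le_trans two_pos.le (h1 (i + 1) (by simp at hi; omega))
    have h2' : 0 ≤ N * L (k + 1) :=
      mul_nonneg (by linarith) (le_trans two_pos.le (h1 (k + 1) le_rfl))
    linarith
  have hEle : (∑ i ∈ Finset.Ico 1 k, L (i + 1)) + N * L (k + 1)
      ≤ ((k : ℝ) - 1 + N) * L 2 := by
    have hsum : ∑ i ∈ Finset.Ico 1 k, L (i + 1) ≤ ((k : ℝ) - 1) * L 2 := by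
      have : ∑ i ∈ Finset.Ico 1 k, L (i + 1) ≤ ∑ _i ∈ Finset.Ico 1 k, L 2 :=
        Finset.sum_le_sum fun i hi => hdec' (i + 1) (by simp at hi; omega) (by simp at hi; omega)
      rw [Finset.sum_const, Nat.card_Ico, nsmul_eq_mul] at this
      have hcast : ((k - 1 : ℕ) : ℝ) = (k : ℝ) - 1 := by
        have : (1 : ℕ) ≤ k := hk
        push_cast [Nat.cast_sub this]; ring
      rwa [hcast] at this
    have hNk : N * L (k + 1) ≤ N * L 2 :=
      mul_le_mul_of_nonneg_left (hdec' (k + 1) (by omega) le_rfl) (by linarith)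
    linarith
  have hL1 : L 1 = 2 * Real.log t := by
    have : L 1 = Real.log (t ^ 2) := by simp [hL]
    rw [this, Real.log_pow]; push_cast; ring
  have hlog_lb : Real.log t ≤ Real.log (PsiKN k N t) := by rw [hlogs]; linarith
  have hlog_ub : Real.log (PsiKN k N t) ≤ 2 * Real.log t := by
    rw [hlogs]; linarith
  -- the induction
  intro i hi1
  induction i, hi1 using Nat.le_induction with
  | base =>
      intro hik
      constructor
      · simpa [hL1, Function.iterate_one] using by linarith [hlog_lb]
      · simpa [hL1, Function.iterate_one] using hlog_ub
  | succ i hi ih =>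
      intro hik
      have hik' : i ≤ k := by omega
      obtain ⟨hlo, hhi⟩ := ih hik'
      have hLi : 2 ≤ L i := h1 i (by omega)
      have hLi1 : 2 ≤ L (i + 1) := h1 (i + 1) (by omega)
      have hMpos : 0 < Real.log^[i] (PsiKN k N t) := by
        have : (1 : ℝ) ≤ (1 / 2) * L i := by linarith
        linarith
      have hit : Real.log^[i + 1] (PsiKN k N t) = Real.log (Real.log^[i] (PsiKN k N t)) :=
        Function.iterate_succ_apply' Real.log i (PsiKN k N t)
      constructor
      · rw [hit]
        show (1 / 2) * L (i + 1) ≤ _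
        have hstep : Real.log ((1 / 2) * L i) ≤ Real.log (Real.log^[i] (PsiKN k N t)) :=
          Real.log_le_log (by linarith) hlo
        have hsplit : Real.log ((1 / 2) * L i) = -Real.log 2 + L (i + 1) := by
          rw [Real.log_mul (by norm_num) (by linarith), ← hLsucc i, one_div, Real.log_inv]
        have hlog2 : Real.log 2 ≤ 1 := by
          have := Real.log_le_sub_one_of_pos (by norm_num : (0:ℝ) < 2)
          linarith
        have : (1 / 2) * L (i + 1) ≤ -Real.log 2 + L (i + 1) := by linarith
        linarith [hsplit ▸ hstep]
      · rw [hit, Function.iterate_succ_apply']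
        exact Real.log_le_log hMpos hhi

/-- For `k ≥ 1`, `N > 1` there exist `c, C, t₀ > 0` depending only on `k, N`
such that for all `t ≥ t₀`, writing `s = Ψ(t)`,
`c·s/((ln s)·(ln^[2] s)⋯(ln^[k-1] s)·(ln^[k] s)^N) ≤ t ≤ C·s/((ln s)⋯(ln^[k] s)^N)`. -/
theorem Psi_inverse_comparable
    (k : ℕ) (hk : 1 ≤ k) (N : ℝ) (hN : 1 < N) :
    ∃ c : ℝ, 0 < c ∧ ∃ C : ℝ, 0 < C ∧ ∃ t₀ : ℝ, 0 < t₀ ∧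
      ∀ t, t₀ ≤ t →
        c * (PsiKN k N t /
            ((∏ i ∈ Finset.Ico 1 k, Real.log^[i] (PsiKN k N t)) *
              (Real.log^[k] (PsiKN k N t)) ^ N)) ≤ t ∧
        t ≤ C * (PsiKN k N t /
            ((∏ i ∈ Finset.Ico 1 k, Real.log^[i] (PsiKN k N t)) *
              (Real.log^[k] (PsiKN k N t)) ^ N)) := by
  have hN0 : (0 : ℝ) ≤ N := by linarith
  set c : ℝ := (1 / 2 : ℝ) ^ (k - 1) * (1 / 2 : ℝ) ^ N with hc
  have hcpos : 0 < c := mul_pos (pow_pos (by norm_num) _) (Real.rpow_pos_of_pos (by norm_num) N)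
  -- eventual hypotheses
  have hev1 : ∀ᶠ t : ℝ in atTop, ∀ j, j ≤ k + 1 → 2 ≤ Real.log^[j] (t ^ 2) := by
    have : ∀ j ∈ Finset.range (k + 2), ∀ᶠ t : ℝ in atTop, 2 ≤ Real.log^[j] (t ^ 2) := by
      intro j _
      exact ((tendsto_iterlog j).comp (tendsto_pow_atTop two_ne_zero)).eventually_ge_atTop 2
    have := (Filter.eventually_all_finset (Finset.range (k + 2))).2 this
    filter_upwards [this] with t h j hj
    exact h j (Finset.mem_range.2 (by omega))
  have hev2 : ∀ᶠ t : ℝ in atTop, ((k : ℝ) - 1 + N) * Real.log^[2] (t ^ 2) ≤ Real.log t := by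
    set K : ℝ := (k : ℝ) - 1 + N with hK
    have hKpos : 0 < K := by
      have : (1 : ℝ) ≤ (k : ℝ) := by exact_mod_cast hk
      simp only [hK]; linarith
    have hy : ∀ᶠ y : ℝ in atTop, K * Real.log (2 * y) ≤ y := by
      have hlo := Real.isLittleO_log_id_atTop.def (show (0:ℝ) < 1 / (2 * K) by positivity)
      filter_upwards [hlo, eventually_ge_atTop (max 1 (2 * K * Real.log 2))] with y h1 h2
      have hy1 : (1 : ℝ) ≤ y := le_trans (le_max_left _ _) h2
      have hy2 : 2 * K * Real.log 2 ≤ y := le_trans (le_max_right _ _) h2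
      have hlogy : Real.log y ≤ (1 / (2 * K)) * y := by
        have := h1
        simp only [Real.norm_eq_abs, id] at this
        calc Real.log y ≤ |Real.log y| := le_abs_self _
          _ ≤ (1 / (2 * K)) * |y| := this
          _ = (1 / (2 * K)) * y := by rw [abs_of_nonneg (by linarith)]
      have hsplit : Real.log (2 * y) = Real.log 2 + Real.log y :=
        Real.log_mul (by norm_num) (by linarith)
      rw [hsplit]
      have h3 : K * Real.log y ≤ y / 2 := by
        have := mul_le_mul_of_nonneg_left hlogy hKpos.le
        calc K * Real.log y ≤ K * ((1 / (2 * K)) * y) := this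
          _ = y / 2 := by field_simp
      nlinarith [hKpos]
    have hcomp := Real.tendsto_log_atTop.eventually hy
    filter_upwards [hcomp, eventually_ge_atTop (1 : ℝ)] with t h ht
    have hlog2 : Real.log^[2] (t ^ 2) = Real.log (2 * Real.log t) := by
      have : Real.log (t ^ 2) = 2 * Real.log t := by rw [Real.log_pow]; push_cast; ring
      simp [Function.iterate_succ_apply', this]
    rw [hlog2]; exact h
  obtain ⟨a, ha⟩ := Filter.eventually_atTop.1 (hev1.and hev2)
  refine ⟨c, hcpos, 1, one_pos, max a 1, lt_of_lt_of_le one_pos (le_max_right _ _), ?_⟩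
  intro t htt
  have ht1 : (1 : ℝ) ≤ t := le_trans (le_max_right _ _) htt
  obtain ⟨h1, h2⟩ := ha t (le_trans (le_max_left _ _) htt)
  have key := key_bounds k hk N hN t h1 h2 ht1
  set L : ℕ → ℝ := fun j => Real.log^[j] (t ^ 2) with hLdef
  set M : ℕ → ℝ := fun j => Real.log^[j] (PsiKN k N t) with hMdef
  have hLpos : ∀ j, j ≤ k + 1 → 0 < L j := fun j hj => lt_of_lt_of_le two_pos (h1 j hj)
  have hMlb : ∀ i, 1 ≤ i → i ≤ k → (1 / 2) * L i ≤ M i := fun i a b => (key i a b).1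
  have hMub : ∀ i, 1 ≤ i → i ≤ k → M i ≤ L i := fun i a b => (key i a b).2
  have hMpos : ∀ i, 1 ≤ i → i ≤ k → 0 < M i := by
    intro i hi hik
    have := hMlb i hi hik
    have := hLpos i (by omega)
    linarith
  set P : ℝ := ∏ i ∈ Finset.Ico 1 k, L i with hPdef
  set Q : ℝ := L k ^ N with hQdef
  have hPpos : 0 < P := Finset.prod_pos fun i hi => hLpos i (by simp at hi; omega)
  have hQpos : 0 < Q := Real.rpow_pos_of_pos (hLpos k (by omega)) N
  have htpos : 0 < t := lt_of_lt_of_le one_pos ht1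
  have hsval : PsiKN k N t = t * (P * Q) := by unfold PsiKN; rw [hPdef, hQdef]; ring
  set D : ℝ := (∏ i ∈ Finset.Ico 1 k, M i) * M k ^ N with hDdef
  have hmem : ∀ i ∈ Finset.Ico 1 k, 1 ≤ i ∧ i ≤ k := by
    intro i hi; simp at hi; omega
  have hprod_ub : ∏ i ∈ Finset.Ico 1 k, M i ≤ P :=
    Finset.prod_le_prod (fun i hi => (hMpos i (hmem i hi).1 (hmem i hi).2).le)
      (fun i hi => hMub i (hmem i hi).1 (hmem i hi).2)
  have hprod_lb : (1 / 2 : ℝ) ^ (k - 1) * P ≤ ∏ i ∈ Finset.Ico 1 k, M i := by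
    have h := Finset.prod_le_prod (s := Finset.Ico 1 k)
      (f := fun i => (1 / 2 : ℝ) * L i) (g := fun i => M i)
      (fun i hi => by have := hLpos i (by have := hmem i hi; omega); positivity)
      (fun i hi => hMlb i (hmem i hi).1 (hmem i hi).2)
    calc (1 / 2 : ℝ) ^ (k - 1) * P
        = ∏ i ∈ Finset.Ico 1 k, ((1 / 2 : ℝ) * L i) := by
          rw [Finset.prod_mul_distrib, Finset.prod_const, Nat.card_Ico]
      _ ≤ _ := h
  have hr_ub : M k ^ N ≤ Q :=
    Real.rpow_le_rpow (hMpos k hk le_rfl).le (hMub k hk le_rfl) hN0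
  have hr_lb : (1 / 2 : ℝ) ^ N * Q ≤ M k ^ N := by
    have : ((1 / 2 : ℝ) * L k) ^ N ≤ M k ^ N :=
      Real.rpow_le_rpow (by have := hLpos k (by omega); positivity) (hMlb k hk le_rfl) hN0
    rwa [Real.mul_rpow (by norm_num) (hLpos k (by omega)).le] at this
  have hD_ub : D ≤ P * Q := by
    rw [hDdef]
    exact mul_le_mul hprod_ub hr_ub (Real.rpow_nonneg (hMpos k hk le_rfl).le N) hPpos.le
  have hD_lb : c * (P * Q) ≤ D := by
    rw [hDdef, hc]
    calc (1 / 2 : ℝ) ^ (k - 1) * (1 / 2 : ℝ) ^ N * (P * Q)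
        = ((1 / 2 : ℝ) ^ (k - 1) * P) * ((1 / 2 : ℝ) ^ N * Q) := by ring
      _ ≤ (∏ i ∈ Finset.Ico 1 k, M i) * (M k ^ N) := by
          apply mul_le_mul hprod_lb hr_lb (by positivity) ?_
          exact le_trans (by positivity) hprod_lb
  have hDpos : 0 < D := lt_of_lt_of_le (by positivity) hD_lb
  have hspos : 0 < PsiKN k N t := by rw [hsval]; positivity
  constructor
  · -- c * (s / D) ≤ t
    have hdd : PsiKN k N t / D ≤ PsiKN k N t / (c * (P * Q)) :=
      div_le_div_of_nonneg_left hspos.le (by positivity) hD_lb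
    have heq : c * (PsiKN k N t / (c * (P * Q))) = t := by
      rw [hsval]; field_simp
    calc c * (PsiKN k N t / D) ≤ c * (PsiKN k N t / (c * (P * Q))) :=
          mul_le_mul_of_nonneg_left hdd hcpos.le
      _ = t := heq
  · -- t ≤ 1 * (s / D)
    have hdd : PsiKN k N t / (P * Q) ≤ PsiKN k N t / D :=
      div_le_div_of_nonneg_left hspos.le hDpos hD_ub
    have heq : PsiKN k N t / (P * Q) = t := by
      rw [hsval]; field_simp
    rw [one_mul]
    calc t = PsiKN k N t / (P * Q) := heq.symm
      _ ≤ _ := hdd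
end

section
/- Let k ≥ 1 be an integer and N > 1 a real number, and define for t with t² ≥ exp^{(k)}(2N): Φ(t) = t²·(ln t²)²·(ln^{(2)} t²)²⋯(ln^{(k−1)} t²)²·(ln^{(k)} t²)^{2N}. Then there exist constants c, C, t₀ > 0 depending only on k and N such that for all t ≥ t₀, writing s = Φ(t), one has c·√s/((ln s)·(ln^{(2)} s)⋯(ln^{(k−1)} s)·(ln^{(k)} s)^{N}) ≤ t ≤ C·√s/((ln s)·(ln^{(2)} s)⋯(ln^{(k−1)} s)·(ln^{(k)} s)^{N}). -/
open Real Finset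

noncomputable def expT : ℕ → ℝ
  | 0 => 1
  | (i+1) => Real.exp (expT i)

lemma expT_ge_one : ∀ i, 1 ≤ expT i
  | 0 => le_refl 1
  | (i+1) => by
      have := expT_ge_one i
      simpa [expT] using Real.one_le_exp (by linarith)

lemma expT_mono : ∀ {i j : ℕ}, i ≤ j → expT i ≤ expT j := by
  intro i j h
  induction j, h using Nat.le_induction with
  | base => exact le_refl _
  | succ j hij ih =>
      have : expT j ≤ expT (j+1) := by
        have := Real.add_one_le_exp (expT j)
        simp only [expT]; linarith
      linarith

lemma log_ge_of_exp_le {x : ℝ} {c : ℝ} (h : Real.exp c ≤ x) : c ≤ Real.log x := by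
  have hx0 : 0 < x := lt_of_lt_of_le (Real.exp_pos _) h
  have := Real.log_le_log (Real.exp_pos c) h
  simpa [Real.log_exp] using this

lemma iterLog_mono : ∀ (i : ℕ) {x y : ℝ}, expT i ≤ x → x ≤ y →
    Real.log^[i] x ≤ Real.log^[i] y := by
  intro i
  induction i with
  | zero => intro x y _ h; simpa using h
  | succ i ih =>
      intro x y hx hxy
      rw [Function.iterate_succ_apply, Function.iterate_succ_apply]
      have hx0 : 0 < x := lt_of_lt_of_le (Real.exp_pos _) hx
      exact ih (log_ge_of_exp_le hx) (Real.log_le_log hx0 hxy)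

lemma iterLog_ge_one : ∀ (i : ℕ) {x : ℝ}, expT i ≤ x → 1 ≤ Real.log^[i] x := by
  intro i
  induction i with
  | zero => intro x h; simpa [expT] using h
  | succ i ih =>
      intro x hx
      rw [Function.iterate_succ_apply]
      exact ih (log_ge_of_exp_le hx)

lemma iterLog_le_iterLog_of_le : ∀ {i j : ℕ}, i ≤ j → ∀ {x : ℝ}, expT j ≤ x →
    Real.log^[j] x ≤ Real.log^[i] x := by
  intro i j h
  induction j, h using Nat.le_induction with
  | base => intro x _; exact le_refl _
  | succ j hij ih =>
      intro x hx
      have hx' : expT j ≤ x := le_trans (expT_mono (Nat.le_succ j)) hx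
      have h1 : 1 ≤ Real.log^[j] x := iterLog_ge_one j hx'
      have h2 : Real.log (Real.log^[j] x) ≤ Real.log^[j] x := by
        have := Real.log_le_sub_one_of_pos (by linarith : (0:ℝ) < Real.log^[j] x)
        linarith
      calc Real.log^[j+1] x = Real.log (Real.log^[j] x) := Function.iterate_succ_apply' _ _ _
        _ ≤ Real.log^[j] x := h2
        _ ≤ Real.log^[i] x := ih hx'

lemma log_two_le_one : Real.log 2 ≤ 1 := by
  have := Real.log_le_sub_one_of_pos (by norm_num : (0:ℝ) < 2); linarith

lemma iterLog_sq : ∀ (i : ℕ) {x : ℝ}, expT (i+1) ≤ x →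
    Real.log^[i+1] (x^2) ≤ 2 * Real.log^[i+1] x := by
  intro i
  induction i with
  | zero =>
      intro x hx
      have hx0 : 0 < x := lt_of_lt_of_le (Real.exp_pos _) hx
      norm_num [Real.log_pow]
  | succ i ih =>
      intro x hx
      have hx' : expT (i+1) ≤ x := le_trans (expT_mono (Nat.le_succ _)) hx
      have hx1 : 1 ≤ x := le_trans (expT_ge_one _) hx'
      have hxsq : x ≤ x^2 := by nlinarith
      have h1 : 1 ≤ Real.log^[i+1] x := iterLog_ge_one _ hx'
      have h2 : Real.log^[i+1] x ≤ Real.log^[i+1] (x^2) :=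
        iterLog_mono _ hx' hxsq
      have h3 : Real.log^[i+1] (x^2) ≤ 2 * Real.log^[i+1] x := ih hx'
      have h4 : 1 ≤ Real.log^[i+2] x := iterLog_ge_one _ hx
      have hpos : (0:ℝ) < Real.log^[i+1] (x^2) := by linarith
      calc Real.log^[i+2] (x^2) = Real.log (Real.log^[i+1] (x^2)) :=
            Function.iterate_succ_apply' _ _ _
        _ ≤ Real.log (2 * Real.log^[i+1] x) := Real.log_le_log hpos h3
        _ = Real.log 2 + Real.log (Real.log^[i+1] x) := by
            rw [Real.log_mul (by norm_num) (by linarith)]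
        _ = Real.log 2 + Real.log^[i+2] x := by
            rw [Function.iterate_succ_apply' Real.log (i+1) x]
        _ ≤ 2 * Real.log^[i+2] x := by have := log_two_le_one; linarith

lemma one_le_finset_prod {s : Finset ℕ} {f : ℕ → ℝ} (h : ∀ i ∈ s, 1 ≤ f i) :
    1 ≤ ∏ i ∈ s, f i := by
  calc (1:ℝ) = ∏ _i ∈ s, (1:ℝ) := by simp
    _ ≤ ∏ i ∈ s, f i := Finset.prod_le_prod (by intros; norm_num) h

set_option maxHeartbeats 2000000 in
/-- For `k ≥ 1`, `N > 1` there exist `c, C, t₀ > 0` depending only on `k, N`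
such that for all `t ≥ t₀`, writing `s = Φ(t)`,
`c·√s/((ln s)·(ln^[2] s)⋯(ln^[k-1] s)·(ln^[k] s)^N) ≤ t ≤ C·√s/((ln s)⋯(ln^[k] s)^N)`. -/
theorem Phi_inverse_comparable
    (k : ℕ) (hk : 1 ≤ k) (N : ℝ) (hN : 1 < N) :
    ∃ c : ℝ, 0 < c ∧ ∃ C : ℝ, 0 < C ∧ ∃ t₀ : ℝ, 0 < t₀ ∧
      ∀ t, t₀ ≤ t →
        c * (Real.sqrt (PhiKN k N t) /
            ((∏ i ∈ Finset.Ico 1 k, Real.log^[i] (PhiKN k N t)) *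
              (Real.log^[k] (PhiKN k N t)) ^ N)) ≤ t ∧
        t ≤ C * (Real.sqrt (PhiKN k N t) /
            ((∏ i ∈ Finset.Ico 1 k, Real.log^[i] (PhiKN k N t)) *
              (Real.log^[k] (PhiKN k N t)) ^ N)) := by
  obtain ⟨M, hMdef⟩ : ∃ M : ℝ, M = 2 * ((k:ℝ) - 1) + 2 * N := ⟨_, rfl⟩
  have hk1 : (1:ℝ) ≤ (k:ℝ) := by exact_mod_cast hk
  have hM0 : 0 < M := by rw [hMdef]; nlinarith
  refine ⟨1, one_pos, 2^(k-1) * (2:ℝ)^N, by positivity,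
    max (expT (k+1)) ((2*M)^(2*M)), ?_, ?_⟩
  · exact lt_of_lt_of_le one_pos (le_trans (expT_ge_one _) (le_max_left _ _))
  intro t ht
  have ht1 : (1:ℝ) ≤ t :=
    le_trans (le_trans (expT_ge_one (k+1)) (le_max_left _ _)) ht
  have ht0 : 0 < t := by linarith
  obtain ⟨x, hxdef⟩ : ∃ x : ℝ, x = t^2 := ⟨_, rfl⟩
  have htx : t ≤ x := by rw [hxdef]; nlinarith
  have hx1 : expT (k+1) ≤ x := le_trans (le_trans (le_max_left _ _) ht) htx
  have hx2 : (2*M)^(2*M) ≤ x := le_trans (le_trans (le_max_right _ _) ht) htx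
  have hx0 : (0:ℝ) < x := by rw [hxdef]; nlinarith
  have hxone : (1:ℝ) ≤ x := le_trans (expT_ge_one _) hx1
  -- facts about a i = log^[i] x
  have hExpT : ∀ i, i ≤ k+1 → expT i ≤ x := fun i hi => le_trans (expT_mono hi) hx1
  have ha1 : ∀ i, i ≤ k+1 → 1 ≤ Real.log^[i] x := fun i hi => iterLog_ge_one i (hExpT i hi)
  have hale : ∀ i, i ∈ Finset.Ico 1 k → Real.log^[i] x ≤ Real.log^[1] x := by
    intro i hi
    rw [Finset.mem_Ico] at hi
    exact iterLog_le_iterLog_of_le hi.1 (hExpT i (by omega))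
  have hak1 : 1 ≤ Real.log^[k] x := ha1 k (by omega)
  have haka1 : Real.log^[k] x ≤ Real.log^[1] x :=
    iterLog_le_iterLog_of_le hk (hExpT k (by omega))
  obtain ⟨P, hPdef⟩ : ∃ P : ℝ, P = ∏ i ∈ Finset.Ico 1 k, (Real.log^[i] x)^2 := ⟨_, rfl⟩
  obtain ⟨Q, hQdef⟩ : ∃ Q : ℝ, Q = (Real.log^[k] x) ^ (2*N) := ⟨_, rfl⟩
  obtain ⟨s, hsdef⟩ : ∃ s : ℝ, s = PhiKN k N t := ⟨_, rfl⟩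
  rw [← hsdef]
  have hs : s = x * P * Q := by rw [hsdef, hPdef, hQdef, hxdef]; rfl
  have hP1 : (1:ℝ) ≤ P := by
    rw [hPdef]
    apply one_le_finset_prod
    intro i hi
    have := ha1 i (by rw [Finset.mem_Ico] at hi; omega)
    nlinarith
  have hQ1 : (1:ℝ) ≤ Q := by
    rw [hQdef, show (1:ℝ) = 1 ^ (2*N) from (Real.one_rpow _).symm]
    exact Real.rpow_le_rpow zero_le_one hak1 (by linarith)
  have hPQ1 : (1:ℝ) ≤ P * Q := one_le_mul_of_one_le_of_one_le hP1 hQ1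
  have hxs : x ≤ s := by
    rw [hs]
    nlinarith [mul_le_mul_of_nonneg_left hPQ1 hx0.le]
  have ha10 : (0:ℝ) < Real.log^[1] x := lt_of_lt_of_le one_pos (ha1 1 (by omega))
  have hsx2 : s ≤ x^2 := by
    have hPa : P ≤ (Real.log^[1] x) ^ (2*(k-1)) := by
      rw [hPdef]
      calc ∏ i ∈ Finset.Ico 1 k, (Real.log^[i] x)^2
          ≤ ∏ _i ∈ Finset.Ico 1 k, (Real.log^[1] x)^2 := by
            apply Finset.prod_le_prod
            · intro i _; positivity
            · intro i hi
              have h1 := hale i hi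
              have h0 : (0:ℝ) ≤ Real.log^[i] x := by
                have := ha1 i (by rw [Finset.mem_Ico] at hi; omega); linarith
              nlinarith
        _ = ((Real.log^[1] x)^2) ^ (k-1) := by rw [Finset.prod_const, Nat.card_Ico]
        _ = (Real.log^[1] x) ^ (2*(k-1)) := by rw [← pow_mul]
    have hQa : Q ≤ (Real.log^[1] x) ^ (2*N) := by
      rw [hQdef]
      exact Real.rpow_le_rpow (by linarith) haka1 (by linarith)
    have hcast : ((2*(k-1) : ℕ) : ℝ) = 2*((k:ℝ)-1) := by
      push_cast [Nat.cast_sub hk]; ring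
    have hPQ : P * Q ≤ (Real.log^[1] x) ^ M := by
      have h1 : (Real.log^[1] x) ^ (2*(k-1)) * (Real.log^[1] x) ^ (2*N)
          = (Real.log^[1] x) ^ M := by
        rw [← Real.rpow_natCast (Real.log^[1] x) (2*(k-1)), ← Real.rpow_add ha10,
          hcast, hMdef]
      calc P * Q ≤ (Real.log^[1] x) ^ (2*(k-1)) * (Real.log^[1] x) ^ (2*N) :=
            mul_le_mul hPa hQa (by linarith) (by positivity)
        _ = (Real.log^[1] x) ^ M := h1
    have hlog : Real.log^[1] x ≤ 2*M * x ^ (1/(2*M)) := by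
      have h := Real.log_le_rpow_div hx0.le (by positivity : (0:ℝ) < 1/(2*M))
      have heq : x ^ (1/(2*M)) / (1/(2*M)) = 2*M * x ^ (1/(2*M)) := by
        field_simp
      rw [heq] at h
      simpa using h
    have ha1M : (Real.log^[1] x) ^ M ≤ x := by
      have hrn : (0:ℝ) ≤ x ^ (1/(2*M)) := Real.rpow_nonneg hx0.le _
      have h1 : (Real.log^[1] x) ^ M ≤ (2*M * x ^ (1/(2*M))) ^ M :=
        Real.rpow_le_rpow (by linarith) hlog hM0.le
      have h2 : (2*M * x ^ (1/(2*M))) ^ M = (2*M)^M * x ^ ((1:ℝ)/2) := by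
        rw [Real.mul_rpow (by positivity) hrn, ← Real.rpow_mul hx0.le,
          show 1/(2*M)*M = (1:ℝ)/2 by field_simp]
      have h3 : (2*M)^M ≤ x ^ ((1:ℝ)/2) := by
        have h := Real.rpow_le_rpow (by positivity) hx2 (by norm_num : (0:ℝ) ≤ 1/2)
        rwa [← Real.rpow_mul (by positivity : (0:ℝ) ≤ 2*M),
          show 2*M*(1/2) = M by ring] at h
      have h4 : x ^ ((1:ℝ)/2) * x ^ ((1:ℝ)/2) = x := by
        rw [← Real.rpow_add hx0]; norm_num
      rw [h2] at h1
      nlinarith [Real.rpow_nonneg hx0.le ((1:ℝ)/2)]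
    calc s ≤ x * ((Real.log^[1] x) ^ M) := by rw [hs]; nlinarith
      _ ≤ x * x := by nlinarith
      _ = x^2 := by ring
  -- iterated logs of s
  have hExpTs : ∀ i, i ≤ k → expT i ≤ s := fun i hi =>
    le_trans (hExpT i (by omega)) hxs
  have hab : ∀ i, i ≤ k → Real.log^[i] x ≤ Real.log^[i] s := fun i hi =>
    iterLog_mono i (hExpT i (by omega)) hxs
  have hb2a : ∀ i, 1 ≤ i → i ≤ k → Real.log^[i] s ≤ 2 * Real.log^[i] x := by
    intro i h1i hik
    obtain ⟨j, rfl⟩ := Nat.exists_eq_add_of_le h1i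
    have step1 : Real.log^[1+j] s ≤ Real.log^[1+j] (x^2) :=
      iterLog_mono _ (hExpTs _ hik) hsx2
    have step2 : Real.log^[j+1] (x^2) ≤ 2 * Real.log^[j+1] x :=
      iterLog_sq j (hExpT (j+1) (by omega))
    have hc : (1+j) = (j+1) := by omega
    rw [hc] at step1 ⊢
    exact le_trans step1 step2
  have hb1 : ∀ i, i ≤ k → 1 ≤ Real.log^[i] s := fun i hi =>
    le_trans (ha1 i (by omega)) (hab i hi)
  -- sqrt s
  have hak0 : (0:ℝ) ≤ Real.log^[k] x := by linarith
  have hsqrtP : Real.sqrt P = ∏ i ∈ Finset.Ico 1 k, Real.log^[i] x := by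
    rw [hPdef, Finset.prod_pow]
    exact Real.sqrt_sq (Finset.prod_nonneg fun i hi =>
      le_trans zero_le_one (ha1 i (by rw [Finset.mem_Ico] at hi; omega)))
  have hsqrtQ : Real.sqrt Q = (Real.log^[k] x) ^ N := by
    have hq2 : Q = ((Real.log^[k] x) ^ N)^2 := by
      rw [hQdef, ← Real.rpow_natCast ((Real.log^[k] x) ^ N) 2,
        ← Real.rpow_mul hak0]
      norm_num [mul_comm]
    rw [hq2]
    exact Real.sqrt_sq (Real.rpow_nonneg hak0 N)
  have hsqrt : Real.sqrt s =
      t * ((∏ i ∈ Finset.Ico 1 k, Real.log^[i] x) * (Real.log^[k] x) ^ N) := by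
    have hxP0 : (0:ℝ) ≤ x * P := by nlinarith
    rw [hs, Real.sqrt_mul hxP0 Q, Real.sqrt_mul hx0.le P, hsqrtP, hsqrtQ,
      show Real.sqrt x = t by rw [hxdef]; exact Real.sqrt_sq ht0.le, mul_assoc]
  obtain ⟨A, hAdef⟩ : ∃ A : ℝ,
    A = (∏ i ∈ Finset.Ico 1 k, Real.log^[i] x) * (Real.log^[k] x) ^ N := ⟨_, rfl⟩
  obtain ⟨D, hDdef⟩ : ∃ D : ℝ,
    D = (∏ i ∈ Finset.Ico 1 k, Real.log^[i] s) * (Real.log^[k] s) ^ N := ⟨_, rfl⟩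
  rw [← hDdef]
  have hA1 : (1:ℝ) ≤ A := by
    rw [hAdef]
    apply one_le_mul_of_one_le_of_one_le
    · exact one_le_finset_prod fun i hi => ha1 i (by rw [Finset.mem_Ico] at hi; omega)
    · rw [show (1:ℝ) = 1 ^ N from (Real.one_rpow _).symm]
      exact Real.rpow_le_rpow zero_le_one hak1 (by linarith)
  have hAD : A ≤ D := by
    rw [hAdef, hDdef]
    apply mul_le_mul
    · exact Finset.prod_le_prod
        (fun i hi => le_trans zero_le_one (ha1 i (by rw [Finset.mem_Ico] at hi; omega)))
        (fun i hi => hab i (by rw [Finset.mem_Ico] at hi; omega))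
    · exact Real.rpow_le_rpow hak0 (hab k le_rfl) (by linarith)
    · exact Real.rpow_nonneg hak0 N
    · exact Finset.prod_nonneg fun i hi =>
        le_trans zero_le_one (hb1 i (by rw [Finset.mem_Ico] at hi; omega))
  have hDC : D ≤ 2^(k-1) * (2:ℝ)^N * A := by
    have hprod : ∏ i ∈ Finset.Ico 1 k, Real.log^[i] s ≤
        (2:ℝ)^(k-1) * ∏ i ∈ Finset.Ico 1 k, Real.log^[i] x := by
      calc ∏ i ∈ Finset.Ico 1 k, Real.log^[i] s
          ≤ ∏ i ∈ Finset.Ico 1 k, (2 * Real.log^[i] x) := by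
            apply Finset.prod_le_prod
            · intro i hi
              exact le_trans zero_le_one (hb1 i (by rw [Finset.mem_Ico] at hi; omega))
            · intro i hi
              rw [Finset.mem_Ico] at hi
              exact hb2a i hi.1 (by omega)
        _ = (2:ℝ)^(k-1) * ∏ i ∈ Finset.Ico 1 k, Real.log^[i] x := by
            rw [Finset.prod_mul_distrib, Finset.prod_const, Nat.card_Ico]
    have hbkN : (Real.log^[k] s) ^ N ≤ (2:ℝ)^N * (Real.log^[k] x) ^ N := by
      have h1 : (Real.log^[k] s) ^ N ≤ (2 * Real.log^[k] x) ^ N := by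
        apply Real.rpow_le_rpow (by linarith [hb1 k le_rfl]) (hb2a k hk le_rfl)
        linarith
      rwa [Real.mul_rpow (by norm_num) hak0] at h1
    have h0p : (0:ℝ) ≤ ∏ i ∈ Finset.Ico 1 k, Real.log^[i] s :=
      Finset.prod_nonneg fun i hi =>
        le_trans zero_le_one (hb1 i (by rw [Finset.mem_Ico] at hi; omega))
    have h0a : (0:ℝ) ≤ (2:ℝ)^(k-1) * ∏ i ∈ Finset.Ico 1 k, Real.log^[i] x := by
      apply mul_nonneg (by positivity)
      exact Finset.prod_nonneg fun i hi =>
        le_trans zero_le_one (ha1 i (by rw [Finset.mem_Ico] at hi; omega))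
    calc D ≤ ((2:ℝ)^(k-1) * ∏ i ∈ Finset.Ico 1 k, Real.log^[i] x) *
          ((2:ℝ)^N * (Real.log^[k] x) ^ N) := by
          rw [hDdef]
          exact mul_le_mul hprod hbkN
            (Real.rpow_nonneg (by linarith [hb1 k le_rfl]) N) h0a
      _ = 2^(k-1) * (2:ℝ)^N * A := by rw [hAdef]; ring
  have hD0 : (0:ℝ) < D := lt_of_lt_of_le one_pos (le_trans hA1 hAD)
  have hgoal : Real.sqrt s / D = t * A / D := by rw [hsqrt, hAdef]
  constructor
  · rw [one_mul, hgoal, div_le_iff₀ hD0]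
    nlinarith
  · rw [hgoal,
      show 2^(k-1) * (2:ℝ)^N * (t * A / D) = (2^(k-1) * (2:ℝ)^N * (t * A)) / D by ring,
      le_div_iff₀ hD0]
    nlinarith [mul_le_mul_of_nonneg_left hDC ht0.le]
end
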